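/- arXiv:2304.12787 — 7 statements merged into one kernel-verified Lean document; each statement's English description precedes it below -/
import Mathlib

section
/- Let p > 2 be prime, n ∈ ℕ, and q(x,y) = ax² + bxy + cy² + dx + ey + f ∈ ℤ[x,y] with p ∤ a and p ∤ Δ, where Δ is the determinant of the associated matrix (equivalently, 8Δ is coprime to p). Then the number of solutions (x,y) modulo pⁿ of the congruence q(x,y) ≡ 0 (mod pⁿ) equals pⁿ⁻¹ · (p − χ(b² − 4ac)), where χ denotes the Legendre symbol modulo p. -/
open Finset
set_option linter.unusedSectionVars false
set_option maxHeartbeats 1000000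


section helpers
variable {p : ℕ} [hF : Fact p.Prime]

lemma pow_natCast_self_zero {n : ℕ} : ((p : ZMod (p^n)))^n = 0 := by
  have := ZMod.natCast_self (p^n)
  rwa [Nat.cast_pow] at this

lemma isUnit_zmod_of_not_dvd {m : ℤ} {n : ℕ} (h : ¬ (p:ℤ) ∣ m) :
    IsUnit ((m : ZMod (p^n))) := by
  have hc : IsCoprime (m : ℤ) ((p:ℤ)^n) :=
    (((Nat.prime_iff_prime_int.mp hF.out).coprime_iff_not_dvd.mpr h)).symm.pow_right
  obtain ⟨u, v, huv⟩ := hc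
  have h2 : (u : ZMod (p^n)) * (m : ZMod (p^n)) = 1 := by
    have := congrArg (fun z : ℤ => (z : ZMod (p^n))) huv
    push_cast at this
    rwa [pow_natCast_self_zero, mul_zero, add_zero] at this
  exact IsUnit.of_mul_eq_one _ (mul_comm (u : ZMod (p^n)) (m:ZMod (p^n)) ▸ h2)

end helpers




/-- affine substitution in the first coordinate -/
def affine1 {R : Type*} [CommRing R] (u : Rˣ) (s t : R) : R × R ≃ R × R where
  toFun z := ((u : R) * z.1 + s * z.2 + t, z.2)
  invFun z := ((u⁻¹ : Rˣ) * (z.1 - s * z.2 - t), z.2)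
  left_inv z := by
    ext
    · show (u⁻¹ : Rˣ) * ((u : R) * z.1 + s * z.2 + t - s * z.2 - t) = z.1
      have : (u : R) * z.1 + s * z.2 + t - s * z.2 - t = (u:R) * z.1 := by ring
      rw [this, Units.inv_mul_cancel_left]
    · rfl
  right_inv z := by
    ext
    · show (u : R) * ((u⁻¹:Rˣ) * (z.1 - s * z.2 - t)) + s * z.2 + t = z.1
      rw [Units.mul_inv_cancel_left]; ring
    · rfl

/-- affine substitution in the second coordinate -/
def affine2 {R : Type*} [CommRing R] (u : Rˣ) (s t : R) : R × R ≃ R × R :=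
  (Equiv.prodComm R R).trans ((affine1 u s t).trans (Equiv.prodComm R R))

@[simp] lemma affine1_apply {R : Type*} [CommRing R] (u : Rˣ) (s t : R) (z : R × R) :
    affine1 u s t z = ((u : R) * z.1 + s * z.2 + t, z.2) := rfl

@[simp] lemma affine2_apply {R : Type*} [CommRing R] (u : Rˣ) (s t : R) (z : R × R) :
    affine2 u s t z = (z.1, (u : R) * z.2 + s * z.1 + t) := rfl

section linear
variable {F : Type*} [Field F] [Fintype F] [DecidableEq F]

lemma card_linear_aux {α β : F} (γ : F) (hβ : β ≠ 0) :
    Nat.card {z : F × F // α * z.1 + β * z.2 = γ} = Fintype.card F := by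
  have e : {z : F × F // α * z.1 + β * z.2 = γ} ≃ F :=
    { toFun := fun z => z.1.1
      invFun := fun s => ⟨(s, β⁻¹ * (γ - α * s)), by field_simp; ring⟩
      left_inv := by
        rintro ⟨⟨s, t⟩, hz⟩
        simp only [Subtype.mk.injEq, Prod.mk.injEq, true_and]
        field_simp
        linear_combination -hz
      right_inv := fun s => rfl }
  rw [Nat.card_congr e, Nat.card_eq_fintype_card]

lemma card_linear {α β : F} (γ : F) (h : ¬(α = 0 ∧ β = 0)) :
    Nat.card {z : F × F // α * z.1 + β * z.2 = γ} = Fintype.card F := by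
  by_cases hβ : β = 0
  · have hα : α ≠ 0 := by tauto
    have e : {z : F × F // α * z.1 + β * z.2 = γ} ≃ {z : F × F // β * z.1 + α * z.2 = γ} :=
      (Equiv.prodComm F F).subtypeEquiv (fun z => by
        simp only [Equiv.prodComm_apply, Prod.fst_swap, Prod.snd_swap]
        constructor <;> intro h' <;> linear_combination h')
    rw [Nat.card_congr e, card_linear_aux γ hα]
  · exact card_linear_aux γ hβ

end linear


section hensel
variable {p : ℕ} [hF : Fact p.Prime]

lemma pow_natCast_self_zero' {n : ℕ} : ((p : ZMod (p^n)))^n = 0 := by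
  have := ZMod.natCast_self (p^n)
  rwa [Nat.cast_pow] at this

lemma existsUnique_root {n : ℕ} (C E G : ZMod (p^n))
    (hC : ∃ C', C = (p : ZMod (p^n)) * C') (hE : IsUnit E) :
    ∃! y : ZMod (p^n), C * y^2 + E * y + G = 0 := by
  obtain ⟨C', rfl⟩ := hC
  obtain ⟨eu, heu⟩ := hE
  let w : ZMod (p^n) := ((eu⁻¹ : (ZMod (p^n))ˣ) : ZMod (p^n))
  have hEw : E * w = 1 := by rw [← heu]; exact Units.mul_inv eu
  set φ : ZMod (p^n) → ZMod (p^n) := fun y => -(w * (G + ((p:ZMod (p^n)) * C') * y^2)) with hφ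
  have contract : ∀ (y y' : ZMod (p^n)) (m : ℕ), (∃ z, y - y' = (p:ZMod (p^n))^m * z) →
      (∃ z, φ y - φ y' = (p:ZMod (p^n))^(m+1) * z) := by
    intro y y' m ⟨z, hz⟩
    exact ⟨-(w * C' * (y + y') * z), by
      simp only [hφ]
      linear_combination (-(((p:ZMod (p^n))) * w * C' * (y + y'))) * hz⟩
  have iter : ∀ m : ℕ, ∃ z, φ^[m+1] 0 - φ^[m] 0 = (p:ZMod (p^n))^m * z := by
    intro m
    induction m with
    | zero => exact ⟨φ^[1] 0 - φ^[0] 0, by rw [pow_zero, one_mul]⟩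
    | succ m ih =>
      obtain ⟨z, hz⟩ := contract _ _ m ih
      refine ⟨z, ?_⟩
      have h2 : φ^[m+1] 0 = φ (φ^[m] 0) := Function.iterate_succ_apply' φ m 0
      rw [Function.iterate_succ_apply' φ (m+1), h2]
      rw [h2] at hz
      exact hz
  set y₀ : ZMod (p^n) := φ^[n] 0 with hy₀
  have hfix : φ y₀ = y₀ := by
    obtain ⟨z, hz⟩ := iter n
    rw [Function.iterate_succ_apply' φ n] at hz
    rw [pow_natCast_self_zero', zero_mul] at hz
    linear_combination hz
  have hroot : ((p:ZMod (p^n)) * C') * y₀^2 + E * y₀ + G = 0 := by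
    have hy : -(w * (G + ((p:ZMod (p^n)) * C') * y₀^2)) = y₀ := hfix
    linear_combination (-E) * hy - (G + ((p:ZMod (p^n))*C')*y₀^2) * hEw
  refine ⟨y₀, by exact hroot, ?_⟩
  intro y hy
  set d : ZMod (p^n) := y - y₀ with hd
  have key : d = (p:ZMod (p^n)) * (-(w * C' * (y + y₀)) * d) := by
    linear_combination w * hy - w * hroot + (y₀ - y) * hEw
  set r : ZMod (p^n) := -(w * C' * (y + y₀)) with hr
  have pows : ∀ m : ℕ, (p:ZMod (p^n))^m * r^m * d = d := by
    intro m
    induction m with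
    | zero => simp
    | succ m ih =>
      calc (p:ZMod (p^n))^(m+1) * r^(m+1) * d = (p:ZMod (p^n))^m * r^m * ((p:ZMod (p^n)) * (r * d)) := by ring
      _ = (p:ZMod (p^n))^m * r^m * d := by rw [show (p:ZMod (p^n)) * (r * d) = d by linear_combination -key]
      _ = d := ih
  have : d = 0 := by
    have h5 := pows n
    rw [pow_natCast_self_zero', zero_mul, zero_mul] at h5
    exact h5.symm
  have : y = y₀ := by linear_combination this
  exact this

lemma card_prod_existsUnique {α β : Type*} (P : α × β → Prop)
    (h : ∀ a : α, ∃! b : β, P (a, b)) :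
    Nat.card {z : α × β // P z} = Nat.card α := by
  refine Nat.card_congr ⟨fun z => z.1.1, fun a => ⟨(a, (h a).choose), (h a).choose_spec.1⟩, ?_, ?_⟩
  · rintro ⟨⟨a, b⟩, hz⟩
    simp only [Subtype.mk.injEq, Prod.mk.injEq, true_and]
    exact ((h a).choose_spec.2 b hz).symm
  · intro a
    rfl

end hensel


def diffSqEquiv {F : Type*} [Field F] (h2 : (2:F) ≠ 0) : F × F ≃ F × F where
  toFun z := (z.1 - z.2, z.1 + z.2)
  invFun z := ((2:F)⁻¹ * (z.1 + z.2), (2:F)⁻¹ * (z.2 - z.1))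
  left_inv := by
    rintro ⟨x, y⟩
    simp only [Prod.mk.injEq]
    constructor <;> field_simp <;> ring
  right_inv := by
    rintro ⟨u, v⟩
    simp only [Prod.mk.injEq]
    constructor <;> field_simp <;> ring

@[simp] lemma diffSqEquiv_apply {F : Type*} [Field F] (h2 : (2:F) ≠ 0) (z : F × F) :
    diffSqEquiv h2 z = (z.1 - z.2, z.1 + z.2) := rfl

section modp
variable {p : ℕ} [hF : Fact p.Prime]

lemma odd_prime_ne_two (hp : Odd p) : p ≠ 2 := by
  have := Nat.odd_iff.mp hp
  omega

lemma two_ne_zero_zmod (hp : Odd p) : (2 : ZMod p) ≠ 0 := by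
  intro h
  have h2 : ((2:ℕ) : ZMod p) = 0 := by exact_mod_cast h
  rw [ZMod.natCast_eq_zero_iff] at h2
  exact odd_prime_ne_two hp ((Nat.prime_dvd_prime_iff_eq hF.out Nat.prime_two).mp h2)

lemma card_sqrt (hp : p ≠ 2) (a : ZMod p) :
    (Nat.card {x : ZMod p // x^2 = a} : ℤ) = quadraticChar (ZMod p) a + 1 := by
  have h := quadraticChar_card_sqrts ((ZMod.ringChar_zmod_n p).substr hp) a
  rw [Set.toFinset_card] at h
  rw [Nat.card_eq_fintype_card]
  convert h using 3
  rfl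

lemma card_hyperbola {A : ZMod p} (hA : A ≠ 0) :
    (Nat.card {z : ZMod p × ZMod p // z.1 * z.2 = A} : ℤ) = p - 1 := by
  have e : {z : ZMod p × ZMod p // z.1 * z.2 = A} ≃ {u : ZMod p // u ≠ 0} :=
    { toFun := fun z => ⟨z.1.1, fun h => hA (by rw [← z.2, h, zero_mul])⟩
      invFun := fun u => ⟨(u.1, (u.1)⁻¹ * A), by
        rw [← mul_assoc, mul_inv_cancel₀ u.2, one_mul]⟩
      left_inv := by
        rintro ⟨⟨x, y⟩, hz⟩
        simp only [Subtype.mk.injEq, Prod.mk.injEq, true_and]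
        have hx : (x : ZMod p) ≠ 0 := fun h => hA (by rw [← hz, h, zero_mul])
        field_simp
        linear_combination -hz
      right_inv := fun u => rfl }
  rw [Nat.card_congr e, Nat.card_eq_fintype_card,
    Fintype.card_subtype_compl (fun x : ZMod p => x = 0)]
  rw [Fintype.card_subtype_eq, ZMod.card, Nat.cast_sub hF.out.one_lt.le]
  norm_num

lemma sum_quadChar_sq_sub (hp : Odd p) {A : ZMod p} (hA : A ≠ 0) :
    ∑ x : ZMod p, quadraticChar (ZMod p) (x^2 - A) = -1 := by
  have inv2 : (2 : ZMod p) ≠ 0 := two_ne_zero_zmod hp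
  have e : {z : ZMod p × ZMod p // z.2^2 = z.1^2 - A} ≃ {z : ZMod p × ZMod p // z.1 * z.2 = A} :=
    (diffSqEquiv inv2).subtypeEquiv (by
      rintro ⟨x, y⟩
      simp only [diffSqEquiv_apply]
      constructor <;> intro h <;> linear_combination -h)
  have h1 : (Nat.card {z : ZMod p × ZMod p // z.2^2 = z.1^2 - A} : ℤ)
      = (p : ℤ) + ∑ x : ZMod p, quadraticChar (ZMod p) (x^2 - A) := by
    rw [Nat.card_congr (Equiv.subtypeProdEquivSigmaSubtype (fun a b : ZMod p => b^2 = a^2 - A))]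
    rw [Nat.card_eq_fintype_card, Fintype.card_sigma]
    push_cast
    rw [Finset.sum_congr rfl (fun x _ => by
      rw [← Nat.card_eq_fintype_card, card_sqrt (odd_prime_ne_two hp) (x^2 - A)] )]
    rw [Finset.sum_add_distrib]
    simp [ZMod.card]
    ring
  have h2 : (Nat.card {z : ZMod p × ZMod p // z.2^2 = z.1^2 - A} : ℤ) = p - 1 := by
    rw [Nat.card_congr e]
    exact card_hyperbola hA
  have hcard : (1:ℤ) ≤ p := by exact_mod_cast hF.out.one_lt.le
  linarith [h1.symm.trans h2]

end modp


section lift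
variable {p : ℕ} [hF : Fact p.Prime] {k : ℕ}

lemma pow_cast_zero : ((p : ZMod (p^k)))^k = 0 := by
  have := ZMod.natCast_self (p^k)
  rwa [Nat.cast_pow] at this

/-- parametrization of the kernel of `ZMod (p^(k+1)) → ZMod (p^k)` -/
def jmap (p k : ℕ) : ZMod p → ZMod (p^(k+1)) :=
  fun t => (p : ZMod (p^(k+1)))^k * (t.val : ZMod (p^(k+1)))

/-- reduction mod p -/
noncomputable def rho (p k : ℕ) [Fact p.Prime] : ZMod (p^(k+1)) →+* ZMod p :=
  ZMod.castHom (dvd_pow_self p (Nat.succ_ne_zero k)) (ZMod p)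

/-- reduction mod p^k -/
noncomputable def pim (p k : ℕ) [Fact p.Prime] : ZMod (p^(k+1)) →+* ZMod (p^k) :=
  ZMod.castHom (pow_dvd_pow p (Nat.le_succ k)) (ZMod (p^k))

lemma rho_natCast (m : ℕ) : rho p k ((m : ℕ) : ZMod (p^(k+1))) = (m : ZMod p) :=
  map_natCast _ m

lemma rho_val (x : ZMod (p^(k+1))) : rho p k x = ((x.val : ℕ) : ZMod p) := by
  rw [rho, ZMod.castHom_apply, ← ZMod.natCast_val]

lemma lift_pk_eq {x y : ZMod (p^(k+1))} (h : rho p k x = rho p k y) :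
    (p : ZMod (p^(k+1)))^k * x = (p : ZMod (p^(k+1)))^k * y := by
  have h0 : rho p k (x - y) = 0 := by rw [map_sub, h, sub_self]
  rw [rho_val] at h0
  rw [ZMod.natCast_eq_zero_iff] at h0
  obtain ⟨m, hm⟩ := h0
  have hxy : x - y = (((x - y).val : ℕ) : ZMod (p^(k+1))) :=
    (ZMod.natCast_rightInverse (x - y)).symm
  have : (p : ZMod (p^(k+1)))^k * (x - y) = 0 := by
    rw [hxy, hm]
    push_cast
    rw [show (p : ZMod (p^(k+1)))^k * ((p:ZMod (p^(k+1))) * (m : ZMod (p^(k+1))))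
        = (p : ZMod (p^(k+1)))^(k+1) * m by ring]
    have hz : ((p^(k+1) : ℕ) : ZMod (p^(k+1))) = 0 := ZMod.natCast_self _
    rw [Nat.cast_pow] at hz
    rw [hz, zero_mul]
  linear_combination this

lemma rho_jmap_val (t : ZMod p) : rho p k ((t.val : ℕ) : ZMod (p^(k+1))) = t := by
  rw [rho_natCast]
  exact ZMod.natCast_rightInverse t

lemma jmap_inj : Function.Injective (jmap p k) := by
  intro s t h
  unfold jmap at h
  have h2 : (((p^k * s.val : ℕ)) : ZMod (p^(k+1))) = ((p^k * t.val : ℕ) : ZMod (p^(k+1))) := by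
    push_cast
    exact h
  rw [ZMod.natCast_eq_natCast_iff] at h2
  have h3 : s.val ≡ t.val [MOD p] := by
    apply Nat.ModEq.mul_left_cancel' (a := s.val) (b := t.val) (c := p^k)
        (pow_ne_zero k hF.out.ne_zero)
    rwa [pow_succ] at h2
  have h4 : s.val = t.val := by
    have hs := ZMod.val_lt s
    have ht := ZMod.val_lt t
    rw [Nat.ModEq] at h3
    rwa [Nat.mod_eq_of_lt hs, Nat.mod_eq_of_lt ht] at h3
  calc s = ((s.val : ℕ) : ZMod p) := (ZMod.natCast_rightInverse s).symm
  _ = ((t.val : ℕ) : ZMod p) := by rw [h4]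
  _ = t := ZMod.natCast_rightInverse t

lemma jmap_zero : jmap p k 0 = 0 := by
  unfold jmap
  rw [ZMod.val_zero, Nat.cast_zero, mul_zero]

lemma pim_jmap (t : ZMod p) : pim p k (jmap p k t) = 0 := by
  unfold jmap
  rw [map_mul, map_pow, map_natCast, pow_cast_zero, zero_mul]

lemma ker_jmap {x : ZMod (p^(k+1))} (h : pim p k x = 0) : ∃ t : ZMod p, x = jmap p k t := by
  have hx : x = ((x.val : ℕ) : ZMod (p^(k+1))) := (ZMod.natCast_rightInverse x).symm
  have h2 : pim p k x = ((x.val : ℕ) : ZMod (p^k)) := by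
    rw [pim, ZMod.castHom_apply, ← ZMod.natCast_val]
  rw [h2, ZMod.natCast_eq_zero_iff] at h
  obtain ⟨m, hm⟩ := h
  refine ⟨(m : ZMod p), ?_⟩
  unfold jmap
  calc x = ((x.val : ℕ) : ZMod (p^(k+1))) := hx
  _ = ((p^k * m : ℕ) : ZMod (p^(k+1))) := by rw [hm]
  _ = (p : ZMod (p^(k+1)))^k * ((m : ℕ) : ZMod (p^(k+1))) := by push_cast; ring
  _ = (p : ZMod (p^(k+1)))^k * ((((m : ZMod p).val) : ℕ) : ZMod (p^(k+1))) :=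
      lift_pk_eq (by rw [rho_natCast, rho_jmap_val])

lemma jmap_add (s t : ZMod p) : jmap p k s + jmap p k t = jmap p k (s + t) := by
  unfold jmap
  rw [← mul_add]
  apply lift_pk_eq
  rw [map_add, rho_jmap_val, rho_jmap_val, rho_jmap_val]

lemma jmap_mul (t : ZMod p) (r : ZMod (p^(k+1))) :
    jmap p k t * r = jmap p k (t * rho p k r) := by
  unfold jmap
  rw [mul_assoc]
  apply lift_pk_eq
  rw [map_mul, rho_jmap_val, rho_jmap_val]

lemma jmap_sq (hk : 1 ≤ k) (s t : ZMod p) : jmap p k s * jmap p k t = 0 := by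
  unfold jmap
  have h1 : (p : ZMod (p^(k+1)))^k * ((s.val : ℕ) : ZMod (p^(k+1)))
      * ((p : ZMod (p^(k+1)))^k * ((t.val : ℕ) : ZMod (p^(k+1))))
      = (p : ZMod (p^(k+1)))^(k+1) * ((p : ZMod (p^(k+1)))^(k-1)
        * ((s.val : ℕ) : ZMod (p^(k+1))) * ((t.val : ℕ) : ZMod (p^(k+1)))) := by
    have e : (p : ZMod (p^(k+1)))^k * (p : ZMod (p^(k+1)))^k
        = (p : ZMod (p^(k+1)))^(k+1) * (p : ZMod (p^(k+1)))^(k-1) := by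
      rw [← pow_add, ← pow_add, show k + k = (k+1)+(k-1) by omega]
    linear_combination ((s.val : ZMod (p^(k+1))) * (t.val : ZMod (p^(k+1)))) * e
  rw [h1, pow_cast_zero, zero_mul]

end lift

section base
variable {p : ℕ} [hF : Fact p.Prime]

lemma card_base (hp : Odd p) {M N : ℤ} (hM : ¬ (p:ℤ) ∣ M) (hN : ¬ (p:ℤ) ∣ N) :
    (Nat.card {z : ZMod p × ZMod p //
        z.2^2 + (M : ZMod p) * z.1^2 = (N : ZMod p)} : ℤ)
      = p - legendreSym p (-M) := by
  have hm : (M : ZMod p) ≠ 0 := by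
    rw [Ne, ZMod.intCast_zmod_eq_zero_iff_dvd]; exact hM
  have hn : (N : ZMod p) ≠ 0 := by
    rw [Ne, ZMod.intCast_zmod_eq_zero_iff_dvd]; exact hN
  have e : {z : ZMod p × ZMod p // z.2^2 + (M : ZMod p) * z.1^2 = (N : ZMod p)}
      ≃ {z : ZMod p × ZMod p // z.2^2 = (N : ZMod p) - (M:ZMod p) * z.1^2} :=
    Equiv.subtypeEquivRight (by
      intro z
      constructor <;> intro h <;> linear_combination h)
  rw [Nat.card_congr e,
    Nat.card_congr (Equiv.subtypeProdEquivSigmaSubtype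
      (fun a b : ZMod p => b^2 = (N : ZMod p) - (M:ZMod p) * a^2)),
    Nat.card_eq_fintype_card, Fintype.card_sigma]
  push_cast
  rw [Finset.sum_congr rfl (fun x _ => by
    rw [← Nat.card_eq_fintype_card, card_sqrt (odd_prime_ne_two hp)] )]
  rw [Finset.sum_add_distrib]
  have harg : ∀ x : ZMod p, (N : ZMod p) - (M:ZMod p) * x^2
      = (-(M:ZMod p)) * (x^2 - (M:ZMod p)⁻¹ * (N:ZMod p)) := by
    intro x
    field_simp
    ring
  have hsum : ∑ x : ZMod p, quadraticChar (ZMod p) ((N : ZMod p) - (M:ZMod p) * x^2)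
      = - quadraticChar (ZMod p) (-(M:ZMod p)) := by
    rw [Finset.sum_congr rfl (fun x _ => by rw [harg x, map_mul])]
    rw [← Finset.mul_sum]
    have hA : (M:ZMod p)⁻¹ * (N:ZMod p) ≠ 0 := by
      apply mul_ne_zero (inv_ne_zero hm) hn
    rw [sum_quadChar_sq_sub hp hA, mul_neg_one]
  rw [hsum]
  simp only [Finset.sum_const, Finset.card_univ, ZMod.card, nsmul_eq_mul, mul_one]
  have : legendreSym p (-M) = quadraticChar (ZMod p) (-(M:ZMod p)) := by
    rw [legendreSym]
    push_cast
    ring_nf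
  rw [this]
  ring

end base


section liftcount
variable {p : ℕ} [hF : Fact p.Prime] {k : ℕ}

lemma card_lift (hp : Odd p) {M N : ℤ} (hM : ¬ (p:ℤ) ∣ M) (hN : ¬ (p:ℤ) ∣ N)
    (hk : 1 ≤ k) :
    Nat.card {z : ZMod (p^(k+1)) × ZMod (p^(k+1)) //
        z.2^2 + (M : ZMod (p^(k+1))) * z.1^2 = (N : ZMod (p^(k+1)))}
      = p * Nat.card {z : ZMod (p^k) × ZMod (p^k) //
        z.2^2 + (M : ZMod (p^k)) * z.1^2 = (N : ZMod (p^k))} := by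
  haveI : NeZero (p^k) := ⟨pow_ne_zero k hF.out.ne_zero⟩
  haveI : NeZero (p^(k+1)) := ⟨pow_ne_zero (k+1) hF.out.ne_zero⟩
  have hn : (N : ZMod p) ≠ 0 := by
    rw [Ne, ZMod.intCast_zmod_eq_zero_iff_dvd]; exact hN
  have hmF : (M : ZMod p) ≠ 0 := by
    rw [Ne, ZMod.intCast_zmod_eq_zero_iff_dvd]; exact hM
  have h2F : (2 : ZMod p) ≠ 0 := two_ne_zero_zmod hp
  rw [Nat.card_eq_fintype_card, Nat.card_eq_fintype_card,
    Fintype.card_subtype, Fintype.card_subtype]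
  have hmaps : ∀ z ∈ univ.filter (fun z : ZMod (p^(k+1)) × ZMod (p^(k+1)) =>
      z.2^2 + (M : ZMod (p^(k+1))) * z.1^2 = (N : ZMod (p^(k+1)))),
      (pim p k z.1, pim p k z.2) ∈ univ.filter (fun z : ZMod (p^k) × ZMod (p^k) =>
      z.2^2 + (M : ZMod (p^k)) * z.1^2 = (N : ZMod (p^k))) := by
    intro z hz
    rw [mem_filter] at hz ⊢
    refine ⟨mem_univ _, ?_⟩
    have := congrArg (pim p k) hz.2
    rwa [map_add, map_mul, map_pow, map_pow, map_intCast, map_intCast] at this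
  rw [Finset.card_eq_sum_card_fiberwise hmaps]
  have hfiber : ∀ w ∈ univ.filter (fun z : ZMod (p^k) × ZMod (p^k) =>
      z.2^2 + (M : ZMod (p^k)) * z.1^2 = (N : ZMod (p^k))),
      ((univ.filter (fun z : ZMod (p^(k+1)) × ZMod (p^(k+1)) =>
          z.2^2 + (M : ZMod (p^(k+1))) * z.1^2 = (N : ZMod (p^(k+1))))).filter
        (fun z => (pim p k z.1, pim p k z.2) = w)).card = p := by
    intro w hw
    rw [mem_filter] at hw
    have hw2 := hw.2
    set A : ZMod (p^(k+1)) := ((w.1.val : ℕ) : ZMod (p^(k+1))) with hA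
    set B : ZMod (p^(k+1)) := ((w.2.val : ℕ) : ZMod (p^(k+1))) with hB
    have hπA : pim p k A = w.1 := by
      rw [hA, map_natCast]; exact ZMod.natCast_rightInverse w.1
    have hπB : pim p k B = w.2 := by
      rw [hB, map_natCast]; exact ZMod.natCast_rightInverse w.2
    have hG0 : pim p k (B^2 + (M : ZMod (p^(k+1)))*A^2 - (N : ZMod (p^(k+1)))) = 0 := by
      rw [map_sub, map_add, map_mul, map_pow, map_pow, map_intCast, map_intCast,
        hπA, hπB, hw2, sub_self]
    obtain ⟨g, hg⟩ := ker_jmap hG0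
    set α : ZMod p := 2 * (M : ZMod p) * ((w.1.val : ℕ) : ZMod p) with hα
    set β : ZMod p := 2 * ((w.2.val : ℕ) : ZMod p) with hβ
    have key : ∀ s t : ZMod p,
        ((B + jmap p k t)^2 + (M : ZMod (p^(k+1)))*(A + jmap p k s)^2
          = (N : ZMod (p^(k+1)))) ↔ (α*s + β*t = -g) := by
      intro s t
      have expand : (B + jmap p k t)^2 + (M : ZMod (p^(k+1)))*(A + jmap p k s)^2
          - (N : ZMod (p^(k+1)))
          = (B^2 + (M : ZMod (p^(k+1)))*A^2 - (N : ZMod (p^(k+1))))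
            + (jmap p k t * (2*B)) + (jmap p k s * (2*(M : ZMod (p^(k+1)))*A)) := by
        linear_combination (jmap_sq hk t t) + (M : ZMod (p^(k+1))) * (jmap_sq hk s s)
      have hρB : rho p k (2*B) = β := by
        rw [map_mul, map_ofNat, hB, rho_natCast]
      have hρA : rho p k (2*(M : ZMod (p^(k+1)))*A) = α := by
        rw [map_mul, map_mul, map_ofNat, hA, rho_natCast, map_intCast]
      rw [← sub_eq_zero (b := (N : ZMod (p^(k+1))))]
      rw [expand, hg, jmap_mul, jmap_mul, hρB, hρA, jmap_add, jmap_add]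
      constructor
      · intro h
        have h0 := jmap_inj (h.trans jmap_zero.symm)
        linear_combination h0
      · intro h
        rw [show g + t * β + s * α = 0 by linear_combination h, jmap_zero]
    have hαβ : ¬(α = 0 ∧ β = 0) := by
      rintro ⟨hα0, hβ0⟩
      have hw1 : ((w.1.val : ℕ) : ZMod p) = 0 := by
        rcases mul_eq_zero.mp hα0 with h | h
        · exact absurd h (mul_ne_zero h2F hmF)
        · exact h
      have hw2' : ((w.2.val : ℕ) : ZMod p) = 0 := by
        rcases mul_eq_zero.mp hβ0 with h | h
        · exact absurd h h2F
        · exact h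
      have hk0 : k ≠ 0 := by omega
      have := congrArg (ZMod.castHom (dvd_pow_self p hk0) (ZMod p)) hw.2
      rw [map_add, map_mul, map_pow, map_pow, map_intCast, map_intCast] at this
      rw [ZMod.castHom_apply, ZMod.castHom_apply, ← ZMod.natCast_val, ← ZMod.natCast_val] at this
      rw [hw1, hw2'] at this
      simp at this
      exact hn this.symm
    -- bijection with the line
    have hL : (univ.filter (fun st : ZMod p × ZMod p => α*st.1 + β*st.2 = -g)).card = p := by
      rw [← Fintype.card_subtype, ← Nat.card_eq_fintype_card, card_linear (-g) hαβ, ZMod.card]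
    refine ((Finset.card_bij (fun st _ => (A + jmap p k st.1, B + jmap p k st.2))
      ?_ ?_ ?_).symm).trans hL
    · intro st hst
      rw [mem_filter] at hst ⊢
      rw [mem_filter]
      refine ⟨⟨mem_univ _, ?_⟩, ?_⟩
      · exact (key st.1 st.2).mpr hst.2
      · rw [Prod.mk.injEq, map_add, map_add, pim_jmap, pim_jmap, add_zero, add_zero,
          hπA, hπB]
        exact ⟨rfl, rfl⟩
    · intro st hst st' hst' h
      rw [Prod.mk.injEq] at h
      have h1 : jmap p k st.1 = jmap p k st'.1 := by
        have := h.1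
        rwa [add_right_inj] at this
      have h2 : jmap p k st.2 = jmap p k st'.2 := by
        have := h.2
        rwa [add_right_inj] at this
      exact Prod.ext (jmap_inj h1) (jmap_inj h2)
    · intro z hz
      rw [mem_filter, mem_filter] at hz
      obtain ⟨⟨-, hPz⟩, hπz⟩ := hz
      rw [Prod.mk.injEq] at hπz
      have hz1 : pim p k (z.1 - A) = 0 := by rw [map_sub, hπA, hπz.1, sub_self]
      have hz2 : pim p k (z.2 - B) = 0 := by rw [map_sub, hπB, hπz.2, sub_self]
      obtain ⟨s, hs⟩ := ker_jmap hz1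
      obtain ⟨t, ht⟩ := ker_jmap hz2
      have hzz1 : z.1 = A + jmap p k s := by rw [← hs]; ring
      have hzz2 : z.2 = B + jmap p k t := by rw [← ht]; ring
      refine ⟨(s, t), ?_, ?_⟩
      · rw [mem_filter]
        refine ⟨mem_univ _, ?_⟩
        apply (key s t).mp
        rw [← hzz1, ← hzz2]
        exact hPz
      · exact Prod.ext hzz1.symm hzz2.symm
  rw [Finset.sum_congr rfl hfiber, Finset.sum_const, smul_eq_mul, mul_comm]

end liftcount


section powcount
variable {p : ℕ} [hF : Fact p.Prime]

lemma card_modulus_congr {n m : ℕ} (h : n = m) (M N : ℤ) :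
    Nat.card {z : ZMod n × ZMod n // z.2^2 + (M : ZMod n) * z.1^2 = (N : ZMod n)}
      = Nat.card {z : ZMod m × ZMod m // z.2^2 + (M : ZMod m) * z.1^2 = (N : ZMod m)} := by
  subst h
  rfl

lemma card_pow (hp : Odd p) {M N : ℤ} (hM : ¬ (p:ℤ) ∣ M) (hN : ¬ (p:ℤ) ∣ N) :
    ∀ k : ℕ, 1 ≤ k →
    (Nat.card {z : ZMod (p^k) × ZMod (p^k) //
        z.2^2 + (M : ZMod (p^k)) * z.1^2 = (N : ZMod (p^k))} : ℤ)
      = (p:ℤ)^(k-1) * (p - legendreSym p (-M)) := by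
  intro k
  induction k with
  | zero => omega
  | succ k ih =>
    intro _
    by_cases hk : 1 ≤ k
    · rw [card_lift hp hM hN hk]
      push_cast
      rw [ih hk]
      have harith : (p:ℤ) * (p:ℤ)^(k-1) = (p:ℤ)^k := by
        rw [← pow_succ']
        congr 1
        omega
      linear_combination ((p:ℤ) - legendreSym p (-M)) * harith
    · have hk0 : k = 0 := by omega
      subst hk0
      rw [card_modulus_congr (show p^(0+1) = p by norm_num) M N, card_base hp hM hN]
      norm_num

end powcount


/-- The number of solutions `(x,y)` modulo `pⁿ` of
`a x² + b x y + c y² + d x + e y + f ≡ 0 (mod pⁿ)` equals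
`pⁿ⁻¹ (p − χ(b²−4ac))`, where `χ` is the Legendre symbol mod `p`,
provided `p ∤ a` and `p ∤ 8Δ`. -/
theorem count_solutions_mod_prime_power
    (p : ℕ) [Fact p.Prime] (hp : Odd p) (n : ℕ) (hn : 1 ≤ n)
    (a b c d e f : ℤ)
    (ha : ¬ (p : ℤ) ∣ a)
    (hΔ : ¬ (p : ℤ) ∣ (8*a*c*f + 2*b*d*e - 2*a*e^2 - 2*c*d^2 - 2*f*b^2)) :
    (Nat.card {xy : ZMod (p^n) × ZMod (p^n) //
        (a : ZMod (p^n))*xy.1^2 + b*xy.1*xy.2 + c*xy.2^2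
          + d*xy.1 + e*xy.2 + f = 0} : ℤ)
      = p^(n-1) * (p - legendreSym p (b^2 - 4*a*c)) := by
  have hprime : p.Prime := Fact.out
  have hpInt : Prime (p:ℤ) := Nat.prime_iff_prime_int.mp hprime
  have hp2 : ¬ (p:ℤ) ∣ 2 := by
    intro h
    have h' : p ∣ 2 := by exact_mod_cast h
    exact odd_prime_ne_two hp ((Nat.prime_dvd_prime_iff_eq hprime Nat.prime_two).mp h')
  have h2a : ¬ (p:ℤ) ∣ 2*a := by
    intro h
    rcases hpInt.dvd_mul.mp h with h' | h'
    · exact hp2 h'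
    · exact ha h'
  have h4a : ¬ (p:ℤ) ∣ 4*a := by
    intro h
    rw [show (4*a : ℤ) = 2*(2*a) by ring] at h
    rcases hpInt.dvd_mul.mp h with h' | h'
    · exact hp2 h'
    · exact h2a h'
  set C : ℤ := 4*a*c - b^2 with hC
  set E : ℤ := 4*a*e - 2*b*d with hE
  set F : ℤ := 4*a*f - d^2 with hF
  have hdisc : E^2 - 4*C*F = (-8*a) * (8*a*c*f + 2*b*d*e - 2*a*e^2 - 2*c*d^2 - 2*f*b^2) := by
    rw [hC, hE, hF]; ring
  have hND : ¬ (p:ℤ) ∣ (E^2 - 4*C*F) := by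
    rw [hdisc]
    intro h
    rcases hpInt.dvd_mul.mp h with h' | h'
    · rw [show (-8*a : ℤ) = 2*(2*(2*(-a))) by ring] at h'
      rcases hpInt.dvd_mul.mp h' with h'' | h''
      · exact hp2 h''
      rcases hpInt.dvd_mul.mp h'' with h3 | h3
      · exact hp2 h3
      rcases hpInt.dvd_mul.mp h3 with h4 | h4
      · exact hp2 h4
      · exact ha (dvd_neg.mp h4)
    · exact hΔ h'
  have hu2a : IsUnit ((2*a : ℤ) : ZMod (p^n)) := isUnit_zmod_of_not_dvd h2a
  have hu4a : IsUnit ((4*a : ℤ) : ZMod (p^n)) := isUnit_zmod_of_not_dvd h4a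
  -- step 1 : complete the square in x
  have step1 : Nat.card {xy : ZMod (p^n) × ZMod (p^n) //
        (a : ZMod (p^n))*xy.1^2 + b*xy.1*xy.2 + c*xy.2^2
          + d*xy.1 + e*xy.2 + f = 0}
      = Nat.card {z : ZMod (p^n) × ZMod (p^n) //
        z.1^2 + (C : ZMod (p^n))*z.2^2 + (E : ZMod (p^n))*z.2 + (F : ZMod (p^n)) = 0} := by
    refine Nat.card_congr (Equiv.subtypeEquiv
      (affine1 hu2a.unit (b : ZMod (p^n)) (d : ZMod (p^n))) (fun z => ?_))
    simp only [affine1_apply, IsUnit.unit_spec]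
    have key : (((2*a : ℤ) : ZMod (p^n)) * z.1 + (b : ZMod (p^n)) * z.2 + (d : ZMod (p^n)))^2
        + (C : ZMod (p^n))*z.2^2 + (E : ZMod (p^n))*z.2 + (F : ZMod (p^n))
        = ((4*a : ℤ) : ZMod (p^n)) * ((a : ZMod (p^n))*z.1^2 + b*z.1*z.2 + c*z.2^2
          + d*z.1 + e*z.2 + f) := by
      rw [hC, hE, hF]
      push_cast
      ring
    rw [key, hu4a.mul_right_eq_zero]
  rw [step1]
  by_cases hdvd : (p:ℤ) ∣ C
  · -- degenerate conic : p | b² - 4ac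
    have hEdvd : ¬ (p:ℤ) ∣ E := by
      intro h
      apply hND
      have h1 : (p:ℤ) ∣ E^2 := by rw [sq]; exact h.mul_left E
      have h2 : (p:ℤ) ∣ 4*C*F := by
        rw [show (4*C*F : ℤ) = 4*F*C by ring]
        exact hdvd.mul_left _
      exact dvd_sub h1 h2
    have hEu : IsUnit ((E : ℤ) : ZMod (p^n)) := isUnit_zmod_of_not_dvd hEdvd
    have hCp : ∃ C', ((C : ℤ) : ZMod (p^n)) = (p : ZMod (p^n)) * C' := by
      obtain ⟨m, hm⟩ := hdvd
      exact ⟨(m : ZMod (p^n)), by rw [hm]; push_cast; ring⟩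
    have huniq : ∀ u : ZMod (p^n), ∃! y : ZMod (p^n),
        u^2 + (C : ZMod (p^n))*y^2 + (E : ZMod (p^n))*y + (F : ZMod (p^n)) = 0 := by
      intro u
      have h0 := existsUnique_root ((C:ℤ) : ZMod (p^n)) ((E:ℤ) : ZMod (p^n))
        (((F:ℤ) : ZMod (p^n)) + u^2) hCp hEu
      refine (existsUnique_congr (fun y => ?_)).mp h0
      constructor <;> intro h <;> linear_combination h
    rw [card_prod_existsUnique _ huniq, Nat.card_zmod]
    have hχ : legendreSym p (b^2 - 4*a*c) = 0 := by
      rw [legendreSym.eq_zero_iff, ZMod.intCast_zmod_eq_zero_iff_dvd]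
      rw [show b^2 - 4*a*c = -C by rw [hC]; ring]
      exact dvd_neg.mpr hdvd
    rw [hχ]
    have harith : (p:ℤ)^(n-1) * (p:ℤ) = (p:ℤ)^n := by
      rw [← pow_succ]
      congr 1
      omega
    push_cast
    linear_combination -harith
  · -- nondegenerate conic
    have h2C : ¬ (p:ℤ) ∣ 2*C := by
      intro h
      rcases hpInt.dvd_mul.mp h with h' | h'
      · exact hp2 h'
      · exact hdvd h'
    have h4C : ¬ (p:ℤ) ∣ 4*C := by
      intro h
      rw [show (4*C : ℤ) = 2*(2*C) by ring] at h
      rcases hpInt.dvd_mul.mp h with h' | h'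
      · exact hp2 h'
      · exact h2C h'
    have hu2C : IsUnit ((2*C : ℤ) : ZMod (p^n)) := isUnit_zmod_of_not_dvd h2C
    have hu4C : IsUnit ((4*C : ℤ) : ZMod (p^n)) := isUnit_zmod_of_not_dvd h4C
    have step2 : Nat.card {z : ZMod (p^n) × ZMod (p^n) //
        z.1^2 + (C : ZMod (p^n))*z.2^2 + (E : ZMod (p^n))*z.2 + (F : ZMod (p^n)) = 0}
        = Nat.card {z : ZMod (p^n) × ZMod (p^n) //
        z.2^2 + ((4*C : ℤ) : ZMod (p^n))*z.1^2 = ((E^2 - 4*C*F : ℤ) : ZMod (p^n))} := by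
      refine Nat.card_congr (Equiv.subtypeEquiv
        (affine2 hu2C.unit 0 (E : ZMod (p^n))) (fun z => ?_))
      simp only [affine2_apply, IsUnit.unit_spec]
      rw [← hu4C.mul_right_eq_zero (b := z.1^2 + (C : ZMod (p^n))*z.2^2
        + (E : ZMod (p^n))*z.2 + (F : ZMod (p^n)))]
      constructor <;> intro h <;>
        linear_combination (norm := (rw [hC, hE, hF]; push_cast; ring_nf)) h
    rw [step2, card_pow hp h4C hND n hn]
    have hχ : legendreSym p (-(4*C)) = legendreSym p (b^2 - 4*a*c) := by
      rw [show -(4*C) = 2^2 * (b^2 - 4*a*c) by rw [hC]; ring]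
      rw [legendreSym.mul, legendreSym.sq_one', one_mul]
      rw [Ne, ZMod.intCast_zmod_eq_zero_iff_dvd]
      exact hp2
    rw [hχ]
end

section
/- Let p > 2 be prime and q(x,y) = ax² + bxy + cy² + dx + ey + f ∈ ℤ[x,y] with p ∤ a and 8Δ coprime to p. Then the number of solutions (x,y) ∈ (ℤ/pℤ)² of q(x,y) ≡ 0 (mod p) is p − χ(b² − 4ac), where χ is the Legendre symbol mod p. -/
open Finset

namespace CountSolAux

variable {F : Type*} [Field F] [Fintype F] [DecidableEq F]

local notation "χ" => quadraticChar F

lemma sum_mul_shift (hF : ringChar F ≠ 2) {k : F} (hk : k ≠ 0) :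
    ∑ t : F, χ (t * (t - k)) = -1 := by
  have h1 : ∑ u : F, χ (u * (u - 1)) = ∑ t : F, χ (t * (t - k)) := by
    refine Fintype.sum_bijective (fun u : F => k * u) (mulLeft_bijective₀ k hk) _ _ fun u => ?_
    have h : k * u * (k * u - k) = k ^ 2 * (u * (u - 1)) := by ring
    rw [h, map_mul χ (k ^ 2), quadraticChar_sq_one' hk, one_mul]
  rw [← h1]
  have h2 : ∀ u : F, χ (u * (u - 1)) = χ (-1) * (χ u * χ (1 - u)) := by
    intro u
    have : u * (u - 1) = -1 * (u * (1 - u)) := by ring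
    rw [this, map_mul, map_mul]
  simp only [h2]
  rw [← mul_sum]
  have hj : ∑ u : F, χ u * χ (1 - u) = jacobiSum χ χ := rfl
  rw [hj]
  have : jacobiSum χ χ = - χ (-1) := by
    have h := jacobiSum_nontrivial_inv (R := ℤ) (quadraticChar_ne_one hF)
    rwa [(quadraticChar_isQuadratic F).inv] at h
  rw [this]
  have : χ (-1) * χ (-1) = 1 := by
    rw [← map_mul]; norm_num
  rw [mul_neg, this]

lemma sum_sq_sub (hF : ringChar F ≠ 2) {k : F} (hk : k ≠ 0) :
    ∑ z : F, χ (z ^ 2 - k) = -1 := by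
  classical
  have step1 : ∑ z : F, χ (z ^ 2 - k)
      = ∑ t ∈ univ.image (fun z : F => z ^ 2), #{z ∈ univ | z ^ 2 = t} • χ (t - k) :=
    Finset.sum_comp (fun t => χ (t - k)) (fun z : F => z ^ 2)
  have step2 : ∑ t ∈ univ.image (fun z : F => z ^ 2), #{z ∈ univ | z ^ 2 = t} • χ (t - k)
      = ∑ t : F, #{z ∈ univ | z ^ 2 = t} • χ (t - k) := by
    refine Finset.sum_subset (subset_univ _) fun t _ ht => ?_
    have : #{z ∈ univ | z ^ 2 = t} = 0 := by
      rw [card_eq_zero, filter_eq_empty_iff]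
      intro z _ hz
      exact ht (mem_image.mpr ⟨z, mem_univ z, hz⟩)
    rw [this, zero_smul]
  have step3 : ∀ t : F, (#{z ∈ univ | z ^ 2 = t} • χ (t - k) : ℤ)
      = (χ t + 1) * χ (t - k) := by
    intro t
    have hc : (#{z ∈ univ | z ^ 2 = t} : ℤ) = χ t + 1 := by
      rw [← quadraticChar_card_sqrts hF t]
      congr 1
      rw [Set.toFinset_setOf]
    rw [nsmul_eq_mul, hc]
  rw [step1, step2]
  simp only [step3]
  have expand : ∀ t : F, (χ t + 1) * χ (t - k) = χ (t * (t - k)) + χ (t - k) := by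
    intro t; rw [map_mul]; ring
  simp only [expand]
  rw [Finset.sum_add_distrib, sum_mul_shift hF hk]
  have hshift : ∑ t : F, χ (t - k) = 0 := by
    have h := Fintype.sum_equiv (Equiv.subRight k) (fun t : F => χ (t - k)) χ fun t => rfl
    rw [h]
    exact quadraticChar_sum_zero hF
  rw [hshift, add_zero]

lemma sum_quad (hF : ringChar F ≠ 2) {D B C : F} (hD : D ≠ 0)
    (hdisc : B ^ 2 - 4 * D * C ≠ 0) :
    ∑ y : F, χ (D * y ^ 2 + B * y + C) = - χ D := by
  have h2 : (2 : F) ≠ 0 := Ring.two_ne_zero hF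
  have h4 : (4 : F) ≠ 0 := by
    have : (4 : F) = 2 * 2 := by norm_num
    rw [this]; exact mul_ne_zero h2 h2
  set k := (B ^ 2 - 4 * D * C) / 4 with hk_def
  have hk : k ≠ 0 := div_ne_zero hdisc h4
  have key : ∀ y : F, D * y ^ 2 + B * y + C = D⁻¹ * ((D * y + B / 2) ^ 2 - k) := by
    intro y
    rw [hk_def]
    field_simp
    ring
  simp only [key]
  have hbij : Function.Bijective (fun y : F => D * y + B / 2) := by
    constructor
    · intro y1 y2 h
      simp only at h
      exact mul_left_cancel₀ hD (add_right_cancel h)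
    · intro z
      exact ⟨(z - B / 2) / D, by field_simp; ring⟩
  rw [Fintype.sum_bijective _ hbij _ (fun z => χ (D⁻¹ * (z ^ 2 - k))) fun y => rfl]
  have hDinv : χ D⁻¹ = χ D := by
    have h : D⁻¹ = D * (D⁻¹) ^ 2 := by field_simp
    rw [h, map_mul, quadraticChar_sq_one' (inv_ne_zero hD), mul_one]
  simp only [map_mul]
  rw [← mul_sum, sum_sq_sub hF hk, hDinv]
  ring

lemma sum_lin (hF : ringChar F ≠ 2) {B C : F} (hB : B ≠ 0) :
    ∑ y : F, χ (B * y + C) = 0 := by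
  have hbij : Function.Bijective (fun y : F => B * y + C) := by
    constructor
    · intro y1 y2 h
      simp only at h
      exact mul_left_cancel₀ hB (add_right_cancel h)
    · intro z
      exact ⟨(z - C) / B, by field_simp; ring⟩
  rw [Fintype.sum_bijective _ hbij _ χ fun y => rfl]
  exact quadraticChar_sum_zero hF

end CountSolAux


/-- The number of solutions `(x,y) ∈ (ℤ/pℤ)²` of
`a x² + b x y + c y² + d x + e y + f ≡ 0 (mod p)` is `p − χ(b²−4ac)`,
where `χ` is the Legendre symbol mod `p`, provided `p ∤ a` and `p ∤ 8Δ`. -/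
theorem count_solutions_mod_prime
    (p : ℕ) [Fact p.Prime] (hp : Odd p)
    (a b c d e f : ℤ)
    (ha : ¬ (p : ℤ) ∣ a)
    (hΔ : ¬ (p : ℤ) ∣ (8*a*c*f + 2*b*d*e - 2*a*e^2 - 2*c*d^2 - 2*f*b^2)) :
    (Nat.card {xy : ZMod p × ZMod p //
        (a : ZMod p)*xy.1^2 + b*xy.1*xy.2 + c*xy.2^2 + d*xy.1 + e*xy.2 + f = 0} : ℤ)
      = p - legendreSym p (b^2 - 4*a*c) := by
  classical
  have hp2 : p ≠ 2 := by rintro rfl; simp [Nat.odd_iff] at hp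
  have hchar : ringChar (ZMod p) ≠ 2 := by
    rw [ZMod.ringChar_zmod_n]; exact hp2
  have h2 : (2 : ZMod p) ≠ 0 := Ring.two_ne_zero hchar
  have h4 : (4 : ZMod p) ≠ 0 := by
    have h44 : (4 : ZMod p) = 2 * 2 := by norm_num
    rw [h44]; exact mul_ne_zero h2 h2
  have hA : (a : ZMod p) ≠ 0 := fun h => ha ((ZMod.intCast_zmod_eq_zero_iff_dvd a p).mp h)
  have hΔ' : ((8*a*c*f + 2*b*d*e - 2*a*e^2 - 2*c*d^2 - 2*f*b^2 : ℤ) : ZMod p) ≠ 0 :=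
    fun h => hΔ ((ZMod.intCast_zmod_eq_zero_iff_dvd _ p).mp h)
  set D : ZMod p := (b : ZMod p)^2 - 4*a*c with hD_def
  set B : ZMod p := 2*(b : ZMod p)*d - 4*a*e with hB_def
  set C : ZMod p := (d : ZMod p)^2 - 4*a*f with hC_def
  have h2a : (2 * (a : ZMod p)) ≠ 0 := mul_ne_zero h2 hA
  have hdisc : B^2 - 4*D*C ≠ 0 := by
    have h8 : (8 : ZMod p) ≠ 0 := by
      have : (8 : ZMod p) = 2 * 2 * 2 := by norm_num
      rw [this]; exact mul_ne_zero (mul_ne_zero h2 h2) h2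
    have key : B^2 - 4*D*C
        = -8 * (a : ZMod p)
          * ((8*a*c*f + 2*b*d*e - 2*a*e^2 - 2*c*d^2 - 2*f*b^2 : ℤ) : ZMod p) := by
      rw [hB_def, hD_def, hC_def]; push_cast; ring
    rw [key]
    exact mul_ne_zero (mul_ne_zero (neg_ne_zero.mpr h8) hA) hΔ'
  -- the change of variables
  let E : (ZMod p × ZMod p) ≃ (ZMod p × ZMod p) :=
  { toFun := fun xy => (xy.2, 2*(a : ZMod p)*xy.1 + b*xy.2 + d)
    invFun := fun yu => ((yu.2 - b*yu.1 - d)/(2*a), yu.1)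
    left_inv := fun xy => by
      refine Prod.ext ?_ rfl
      show (2*(a : ZMod p)*xy.1 + b*xy.2 + d - b*xy.2 - d)/(2*a) = xy.1
      rw [div_eq_iff h2a]; ring
    right_inv := fun yu => by
      refine Prod.ext rfl ?_
      show 2*(a : ZMod p)*((yu.2 - b*yu.1 - d)/(2*a)) + b*yu.1 + d = yu.2
      rw [mul_div_cancel₀ _ h2a]; ring }
  have hiff : ∀ xy : ZMod p × ZMod p,
      ((a : ZMod p)*xy.1^2 + b*xy.1*xy.2 + c*xy.2^2 + d*xy.1 + e*xy.2 + f = 0)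
      ↔ ((E xy).2^2 = D*(E xy).1^2 + B*(E xy).1 + C) := by
    intro xy
    obtain ⟨x, y⟩ := xy
    show ((a : ZMod p)*x^2 + b*x*y + c*y^2 + d*x + e*y + f = 0)
      ↔ ((2*(a : ZMod p)*x + b*y + d)^2 = D*y^2 + B*y + C)
    have expand : (2*(a : ZMod p)*x + b*y + d)^2 - (D*y^2 + B*y + C)
        = (4*(a : ZMod p)) * ((a : ZMod p)*x^2 + b*x*y + c*y^2 + d*x + e*y + f) := by
      rw [hD_def, hB_def, hC_def]; ring
    constructor
    · intro h
      have h0 := expand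
      rw [h, mul_zero] at h0
      exact sub_eq_zero.mp h0
    · intro h
      have h0 : (4*(a : ZMod p)) * ((a : ZMod p)*x^2 + b*x*y + c*y^2 + d*x + e*y + f) = 0 := by
        rw [← expand, h, sub_self]
      rcases mul_eq_zero.mp h0 with h' | h'
      · exact absurd h' (mul_ne_zero h4 hA)
      · exact h'
  have e1 := (Equiv.subtypeEquiv E hiff).trans
    (Equiv.subtypeProdEquivSigmaSubtype (fun y u : ZMod p => u^2 = D*y^2 + B*y + C))
  rw [Nat.card_eq_fintype_card, Fintype.card_congr e1, Fintype.card_sigma]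
  have hfib : ∀ t : ZMod p, (Fintype.card {u : ZMod p // u^2 = t} : ℤ)
      = quadraticChar (ZMod p) t + 1 := by
    intro t
    rw [Fintype.card_subtype, ← quadraticChar_card_sqrts hchar t]
    congr 1
    rw [Set.toFinset_setOf]
  push_cast
  have hsum : (∑ y : ZMod p, (Fintype.card {u : ZMod p // u^2 = D*y^2 + B*y + C} : ℤ))
      = (∑ y : ZMod p, quadraticChar (ZMod p) (D*y^2 + B*y + C)) + p := by
    have : ∀ y : ZMod p, (Fintype.card {u : ZMod p // u^2 = D*y^2 + B*y + C} : ℤ)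
        = quadraticChar (ZMod p) (D*y^2 + B*y + C) + 1 := fun y => hfib _
    rw [Finset.sum_congr rfl fun y _ => this y, Finset.sum_add_distrib,
      Finset.sum_const, Finset.card_univ, ZMod.card, nsmul_eq_mul, mul_one]
  rw [hsum]
  have hcast : ((b^2 - 4*a*c : ℤ) : ZMod p) = D := by
    rw [hD_def]; push_cast; ring
  by_cases hD0 : D = 0
  · have hB0 : B ≠ 0 := by
      intro h
      apply hdisc
      rw [hD0, h]; ring
    have : ∑ y : ZMod p, quadraticChar (ZMod p) (D*y^2 + B*y + C)
        = ∑ y : ZMod p, quadraticChar (ZMod p) (B*y + C) := by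
      apply Finset.sum_congr rfl
      intro y _
      rw [hD0, zero_mul, zero_add]
    rw [this, CountSolAux.sum_lin hchar hB0]
    have hleg : legendreSym p (b^2 - 4*a*c) = 0 := by
      rw [legendreSym.eq_zero_iff, hcast, hD0]
    rw [hleg]
    ring
  · rw [CountSolAux.sum_quad hchar hD0 hdisc]
    have hleg : legendreSym p (b^2 - 4*a*c) = quadraticChar (ZMod p) D := by
      have : legendreSym p (b^2 - 4*a*c)
          = quadraticChar (ZMod p) ((b^2 - 4*a*c : ℤ) : ZMod p) := rfl
      rw [this, hcast]
    rw [hleg]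
    ring
end

section
/- Let p be an odd prime, n ∈ ℕ, and suppose p ∤ a·(8Δ) where Δ is the determinant of the matrix associated to q(x,y) = ax²+bxy+cy²+dx+ey+f. Suppose q(α,β) ≡ 0 (mod pⁿ) — interpreting α, β as p-adic integers with q(α,β) = 0 in ℤ_p. For 0 ≤ s ≤ n define x̃(t/p^s) = α − (t/p^s)·M(t/p^s) and ỹ(t/p^s) = β − M(t/p^s) with M(u) = (Au+B)/(au²+bu+c), A = q_x(α,β), B = q_y(α,β). If (x̃(t₁/p^{s₁}), ỹ(t₁/p^{s₁})) ≡ (x̃(t₂/p^{s₂}), ỹ(t₂/p^{s₂})) (mod pⁿ) where aᵗᵢ² + btᵢp^{sᵢ} + cp^{2sᵢ} ≢ 0 (mod p) and 1 ≤ tᵢ ≤ p^{n−sᵢ} with p ∤ tᵢ when sᵢ > 0, then t₂p^{s₁} ≡ t₁p^{s₂} (mod pⁿ), and hence s₁ = s₂ and t₁ = t₂. -/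
/-- Distinctness in the parametrization of solutions of `q(x,y) ≡ 0 mod pⁿ`:
if two parameters `t₁/p^{s₁}` and `t₂/p^{s₂}` give points agreeing mod `pⁿ`,
then `t₂ p^{s₁} ≡ t₁ p^{s₂} (mod pⁿ)`, whence `s₁ = s₂` and `t₁ = t₂`. -/
theorem parametrization_injective
    (p : ℕ) [Fact p.Prime] (hodd : Odd p) (n : ℕ)
    (a b c d e f : ℤ)
    (ha : ¬ (p : ℤ) ∣ a)
    (hΔ : ¬ (p : ℤ) ∣ (8*a*c*f + 2*b*d*e - 2*a*e^2 - 2*c*d^2 - 2*f*b^2))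
    (α β : ℤ_[p])
    (hq : (a : ℤ_[p])*α^2 + b*α*β + c*β^2 + d*α + e*β + f = 0)
    (A B : ℤ_[p]) (hA : A = 2*a*α + b*β + d) (hB : B = b*α + 2*c*β + e)
    (s₁ s₂ : ℕ) (hs₁ : s₁ ≤ n) (hs₂ : s₂ ≤ n)
    (t₁ t₂ : ℤ)
    (ht₁ : 1 ≤ t₁ ∧ t₁ ≤ (p : ℤ)^(n - s₁)) (ht₂ : 1 ≤ t₂ ∧ t₂ ≤ (p : ℤ)^(n - s₂))
    (ht₁' : 0 < s₁ → ¬ (p : ℤ) ∣ t₁) (ht₂' : 0 < s₂ → ¬ (p : ℤ) ∣ t₂)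
    (hden₁ : ¬ (p : ℤ_[p]) ∣ ((a : ℤ_[p])*(t₁:ℤ_[p])^2 + b*t₁*(p:ℤ_[p])^s₁ + c*(p:ℤ_[p])^(2*s₁)))
    (hden₂ : ¬ (p : ℤ_[p]) ∣ ((a : ℤ_[p])*(t₂:ℤ_[p])^2 + b*t₂*(p:ℤ_[p])^s₂ + c*(p:ℤ_[p])^(2*s₂)))
    (m₁ m₂ : ℤ_[p])
    (hm₁ : m₁ * ((a : ℤ_[p])*(t₁:ℤ_[p])^2 + b*t₁*(p:ℤ_[p])^s₁ + c*(p:ℤ_[p])^(2*s₁))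
           = A*(t₁:ℤ_[p]) + B*(p:ℤ_[p])^s₁)
    (hm₂ : m₂ * ((a : ℤ_[p])*(t₂:ℤ_[p])^2 + b*t₂*(p:ℤ_[p])^s₂ + c*(p:ℤ_[p])^(2*s₂))
           = A*(t₂:ℤ_[p]) + B*(p:ℤ_[p])^s₂)
    (hx : (p : ℤ_[p])^n ∣ ((α - (t₁:ℤ_[p])*m₁) - (α - (t₂:ℤ_[p])*m₂)))
    (hy : (p : ℤ_[p])^n ∣ ((β - (p:ℤ_[p])^s₁*m₁) - (β - (p:ℤ_[p])^s₂*m₂))) :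
    (p : ℤ)^n ∣ (t₂*(p:ℤ)^s₁ - t₁*(p:ℤ)^s₂) ∧ s₁ = s₂ ∧ t₁ = t₂ := by
  obtain ⟨u, hu⟩ := hx
  obtain ⟨v, hv⟩ := hy
  have hp : Prime (p : ℤ_[p]) := PadicInt.prime_p
  have hpZ : Prime (p : ℤ) := Nat.prime_iff_prime_int.mp Fact.out
  -- transfer of `p ∣ ·` between ℤ and ℤ_[p]
  have hint : ∀ k : ℤ, (p : ℤ_[p]) ∣ (k : ℤ_[p]) ↔ (p : ℤ) ∣ k := by
    intro k
    constructor
    · intro h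
      exact (PadicInt.norm_int_lt_one_iff_dvd k).mp ((PadicInt.norm_lt_one_iff_dvd _).mpr h)
    · intro h
      exact (PadicInt.norm_lt_one_iff_dvd _).mp ((PadicInt.norm_int_lt_one_iff_dvd k).mpr h)
  set D₁ : ℤ_[p] := (a : ℤ_[p])*(t₁:ℤ_[p])^2 + b*t₁*(p:ℤ_[p])^s₁ + c*(p:ℤ_[p])^(2*s₁) with hD₁
  set D₂ : ℤ_[p] := (a : ℤ_[p])*(t₂:ℤ_[p])^2 + b*t₂*(p:ℤ_[p])^s₂ + c*(p:ℤ_[p])^(2*s₂) with hD₂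
  set X : ℤ_[p] := (t₂:ℤ_[p])*(p:ℤ_[p])^s₁ - (t₁:ℤ_[p])*(p:ℤ_[p])^s₂ with hXdef
  -- not both A, B divisible by p (else p ∣ Δ)
  have hABnot : ¬ ((p : ℤ_[p]) ∣ A ∧ (p : ℤ_[p]) ∣ B) := by
    rintro ⟨hA', hB'⟩
    have hC : (p : ℤ_[p]) ∣ ((d:ℤ_[p])*α + e*β + 2*f) := by
      have hCeq : (d:ℤ_[p])*α + e*β + 2*f = -(α*A) - β*B := by
        linear_combination 2*hq + α*hA + β*hB
      rw [hCeq]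
      exact dvd_sub (dvd_neg.mpr (hA'.mul_left α)) (hB'.mul_left β)
    have hΔid : ((8*a*c*f + 2*b*d*e - 2*a*e^2 - 2*c*d^2 - 2*f*b^2 : ℤ) : ℤ_[p])
        = A*((b:ℤ_[p])*e - 2*c*d) + B*((b:ℤ_[p])*d - 2*a*e)
          + ((d:ℤ_[p])*α + e*β + 2*f)*((4:ℤ_[p])*a*c - b^2) := by
      push_cast
      linear_combination (2*(c:ℤ_[p])*d - b*e)*hA + (2*(a:ℤ_[p])*e - b*d)*hB
    have hdvd : (p : ℤ_[p]) ∣ ((8*a*c*f + 2*b*d*e - 2*a*e^2 - 2*c*d^2 - 2*f*b^2 : ℤ) : ℤ_[p]) := by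
      rw [hΔid]
      exact dvd_add (dvd_add (hA'.mul_right _) (hB'.mul_right _)) (hC.mul_right _)
    exact hΔ ((hint _).mp hdvd)
  -- key divisibilities
  have hm1X : (p:ℤ_[p])^n ∣ m₁ * X :=
    ⟨(p:ℤ_[p])^s₂*u - (t₂:ℤ_[p])*v, by linear_combination ((p:ℤ_[p])^s₂)*hu - (t₂:ℤ_[p])*hv⟩
  have hm2X : (p:ℤ_[p])^n ∣ m₂ * X :=
    ⟨(p:ℤ_[p])^s₁*u - (t₁:ℤ_[p])*v, by linear_combination ((p:ℤ_[p])^s₁)*hu - (t₁:ℤ_[p])*hv⟩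
  obtain ⟨w₁, hw₁⟩ := hm1X
  obtain ⟨w₂, hw₂⟩ := hm2X
  have htBX : (p:ℤ_[p])^n ∣ ((t₁:ℤ_[p]) * B) * X :=
    ⟨((b:ℤ_[p])*t₁*t₂ + c*((t₂:ℤ_[p])*(p:ℤ_[p])^s₁ + (t₁:ℤ_[p])*(p:ℤ_[p])^s₂))*w₂ - D₁*t₂*u, by
      linear_combination (-((t₁:ℤ_[p])*(t₂:ℤ_[p])))*hm₁ + ((t₁:ℤ_[p])^2)*hm₂
        - D₁*(t₂:ℤ_[p])*hu
        + ((b:ℤ_[p])*t₁*t₂ + c*((t₂:ℤ_[p])*(p:ℤ_[p])^s₁ + (t₁:ℤ_[p])*(p:ℤ_[p])^s₂))*hw₂⟩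
  have hpAX : (p:ℤ_[p])^n ∣ ((p:ℤ_[p])^s₂ * A) * X :=
    ⟨D₂*(p:ℤ_[p])^s₁*v + ((a:ℤ_[p])*((t₂:ℤ_[p])*(p:ℤ_[p])^s₁ + (t₁:ℤ_[p])*(p:ℤ_[p])^s₂)
        + b*(p:ℤ_[p])^(s₁+s₂))*w₁, by
      linear_combination (-((p:ℤ_[p])^(s₁+s₂)))*hm₂ + ((p:ℤ_[p])^(2*s₂))*hm₁
        + D₂*((p:ℤ_[p])^s₁)*hv
        + ((a:ℤ_[p])*((t₂:ℤ_[p])*(p:ℤ_[p])^s₁ + (t₁:ℤ_[p])*(p:ℤ_[p])^s₂)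
           + (b:ℤ_[p])*(p:ℤ_[p])^(s₁+s₂))*hw₁⟩
  -- p-adic divisibility of X
  have hXp : (p:ℤ_[p])^n ∣ X := by
    by_cases hu₂ : (p : ℤ_[p]) ∣ m₂
    · by_cases hu₁ : (p : ℤ_[p]) ∣ m₁
      · -- both m₁, m₂ divisible by p
        have h₁ : (p : ℤ_[p]) ∣ A*(t₁:ℤ_[p]) + B*(p:ℤ_[p])^s₁ := hm₁ ▸ hu₁.mul_right D₁
        have h₂ : (p : ℤ_[p]) ∣ A*(t₂:ℤ_[p]) + B*(p:ℤ_[p])^s₂ := hm₂ ▸ hu₂.mul_right D₂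
        rcases Nat.eq_zero_or_pos s₁ with hs10 | hs1pos
        · have hpA : ¬ (p : ℤ_[p]) ∣ A := by
            intro hA'
            apply hABnot
            refine ⟨hA', ?_⟩
            have hBp : (p : ℤ_[p]) ∣ B*(p:ℤ_[p])^s₁ := by
              have := dvd_sub h₁ (hA'.mul_right (t₁:ℤ_[p]))
              simpa using this
            rw [hs10] at hBp
            simpa using hBp
          rcases Nat.eq_zero_or_pos s₂ with hs20 | hs2pos
          · -- s₁ = s₂ = 0, p ∤ A : use p^{s₂} A X ≡ 0
            have h' : (p:ℤ_[p])^n ∣ A * X := by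
              rw [hs20] at hpAX
              simpa using hpAX
            exact hp.pow_dvd_of_dvd_mul_left n hpA h'
          · -- s₁ = 0 < s₂ : impossible
            exfalso
            have hpt₂ : ¬ (p : ℤ_[p]) ∣ (t₂:ℤ_[p]) := fun h => ht₂' hs2pos ((hint t₂).mp h)
            have hAt₂ : (p : ℤ_[p]) ∣ A*(t₂:ℤ_[p]) := by
              have hps : (p : ℤ_[p]) ∣ B*(p:ℤ_[p])^s₂ :=
                ((dvd_pow_self (p:ℤ_[p]) hs2pos.ne').mul_left B)
              have := dvd_sub h₂ hps
              simpa using this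
            exact hpA ((hp.dvd_mul.mp hAt₂).resolve_right hpt₂)
        · -- 0 < s₁ : then p ∣ A, p ∤ B, p ∤ t₁
          have hpt₁ : ¬ (p : ℤ_[p]) ∣ (t₁:ℤ_[p]) := fun h => ht₁' hs1pos ((hint t₁).mp h)
          have hA' : (p : ℤ_[p]) ∣ A := by
            have hAt₁ : (p : ℤ_[p]) ∣ A*(t₁:ℤ_[p]) := by
              have hps : (p : ℤ_[p]) ∣ B*(p:ℤ_[p])^s₁ :=
                ((dvd_pow_self (p:ℤ_[p]) hs1pos.ne').mul_left B)
              have := dvd_sub h₁ hps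
              simpa using this
            exact (hp.dvd_mul.mp hAt₁).resolve_right hpt₁
          have hB' : ¬ (p : ℤ_[p]) ∣ B := fun h => hABnot ⟨hA', h⟩
          have htB : ¬ (p : ℤ_[p]) ∣ (t₁:ℤ_[p]) * B := by
            intro h
            rcases hp.dvd_mul.mp h with h | h
            · exact hpt₁ h
            · exact hB' h
          exact hp.pow_dvd_of_dvd_mul_left n htB htBX
      · exact hp.pow_dvd_of_dvd_mul_left n hu₁ ⟨w₁, hw₁⟩
    · exact hp.pow_dvd_of_dvd_mul_left n hu₂ ⟨w₂, hw₂⟩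
  -- transfer to ℤ
  have key : (p : ℤ)^n ∣ (t₂*(p:ℤ)^s₁ - t₁*(p:ℤ)^s₂) := by
    rw [← PadicInt.pow_p_dvd_int_iff]
    push_cast
    exact hXp
  refine ⟨key, ?_⟩
  have hp0 : (p : ℤ) ≠ 0 := by exact_mod_cast hpZ.ne_zero
  have haux : ∀ s s' : ℕ, ∀ r r' : ℤ, s < s' → s' ≤ n → ¬ (p:ℤ) ∣ r →
      (p : ℤ)^n ∣ (r*(p:ℤ)^s - r'*(p:ℤ)^s') → False := by
    intro s s' r r' hlt hle hpr hd
    have h1 : (p:ℤ)^(s+1) ∣ (r*(p:ℤ)^s - r'*(p:ℤ)^s') :=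
      (pow_dvd_pow _ (by omega : s+1 ≤ n)).trans hd
    have h2 : (p:ℤ)^(s+1) ∣ r'*(p:ℤ)^s' :=
      Dvd.dvd.mul_left (pow_dvd_pow _ (by omega : s+1 ≤ s')) r'
    have h3 : (p:ℤ)^(s+1) ∣ r*(p:ℤ)^s := by
      have := dvd_add h1 h2
      simpa using this
    have h4 : (p:ℤ)^s * (p:ℤ) ∣ (p:ℤ)^s * r := by
      rw [← pow_succ]
      calc (p:ℤ)^(s+1) ∣ r*(p:ℤ)^s := h3
        _ = (p:ℤ)^s * r := by ring
    exact hpr ((mul_dvd_mul_iff_left (pow_ne_zero s hp0)).mp h4)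
  have hseq : s₁ = s₂ := by
    rcases lt_trichotomy s₁ s₂ with h | h | h
    · exact absurd key (fun hd => haux s₁ s₂ t₂ t₁ h hs₂ (ht₂' (by omega)) hd)
    · exact h
    · refine absurd key (fun hd => haux s₂ s₁ t₁ t₂ h hs₁ (ht₁' (by omega)) ?_)
      have := dvd_neg.mpr hd
      simpa [neg_sub] using this
  subst hseq
  refine ⟨rfl, ?_⟩
  have h6 : (p:ℤ)^(n-s₁) ∣ (t₂ - t₁) := by
    have h7 : (p:ℤ)^s₁ * (p:ℤ)^(n-s₁) ∣ (p:ℤ)^s₁ * (t₂ - t₁) := by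
      rw [← pow_add]
      have hn : s₁ + (n - s₁) = n := by omega
      rw [hn]
      calc (p:ℤ)^n ∣ t₂*(p:ℤ)^s₁ - t₁*(p:ℤ)^s₁ := key
        _ = (p:ℤ)^s₁ * (t₂ - t₁) := by ring
    exact (mul_dvd_mul_iff_left (pow_ne_zero s₁ hp0)).mp h7
  have habs : |t₂ - t₁| < (p:ℤ)^(n-s₁) := by
    rcases ht₁ with ⟨ht₁l, ht₁r⟩
    rcases ht₂ with ⟨ht₂l, ht₂r⟩
    rw [abs_lt]
    constructor <;> linarith
  have := Int.eq_zero_of_abs_lt_dvd h6 habs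
  omega
end

section
/- Let Q'(l₁,l₂,l₃) = Ml₁² + Nl₁l₂ + Ol₂² + Pl₁l₃ + Ql₂l₃ + Rl₃² where M = 16aΔ + (be−2cd)², N = −16bΔ + 2(be−2cd)(bd−2ae), O = 16cΔ + (bd−2ae)², P = 2(4ac−b²)(2cd−be), Q = 2(4ac−b²)(2ae−bd), R = (4ac−b²)², and 4Δ = 4acf − ae² − b²f + bde − cd². Then the determinant of the symmetric matrix associated to Q' equals 64Δ²(4ac−b²)³. In particular, if Δ ≠ 0 and 4ac − b² ≠ 0, then Q' is a non-singular quadratic form. -/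
open Matrix

/-- The determinant of the symmetric matrix associated to the dual form `Q'`
equals `64Δ²(4ac−b²)³`; in particular `Q'` is non-singular when `Δ ≠ 0` and
`4ac − b² ≠ 0`. -/
theorem dual_form_determinant
    (a b c d e f Δ : ℚ) (hΔ : Δ = (4*a*c*f - a*e^2 - b^2*f + b*d*e - c*d^2)/4)
    (M N O P Q R : ℚ)
    (hM : M = 16*a*Δ + (b*e - 2*c*d)^2)
    (hN : N = -16*b*Δ + 2*(b*e - 2*c*d)*(b*d - 2*a*e))
    (hO : O = 16*c*Δ + (b*d - 2*a*e)^2)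
    (hP : P = 2*(4*a*c - b^2)*(2*c*d - b*e))
    (hQ : Q = 2*(4*a*c - b^2)*(2*a*e - b*d))
    (hR : R = (4*a*c - b^2)^2) :
    (Matrix.det !![M, N/2, P/2; N/2, O, Q/2; P/2, Q/2, R]
        = 64*Δ^2*(4*a*c - b^2)^3) ∧
    (Δ ≠ 0 → 4*a*c - b^2 ≠ 0 →
      Matrix.det !![M, N/2, P/2; N/2, O, Q/2; P/2, Q/2, R] ≠ 0) := by
  have hdet : Matrix.det !![M, N/2, P/2; N/2, O, Q/2; P/2, Q/2, R]
      = 64*Δ^2*(4*a*c - b^2)^3 := by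
    subst hM hN hO hP hQ hR hΔ
    simp [Matrix.det_fin_three]
    ring
  refine ⟨hdet, fun h1 h2 => ?_⟩
  rw [hdet]
  positivity
end

section
/- Let p be an odd prime, n ≥ 1, and suppose p ∤ a, p ∤ (4ac − b²), and p ∤ 8Δ where Δ is the determinant of the matrix of Q(x,y,z) = ax²+bxy+cy²+dxz+eyz+fz². Then the number of triples (x,y,z) ∈ (ℤ/pⁿℤ)³ with Q(x,y,z) ≡ 0 (mod pⁿ) and gcd(z,p) = 1 equals p^{2n−2}(p−1)(p − χ(b²−4ac)), where χ is the Legendre symbol mod p. -/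
open Finset

namespace CSTM

variable {p : ℕ} [Fact p.Prime]

lemma neZero_pow {k : ℕ} : NeZero (p^k) :=
  ⟨pow_ne_zero _ (Nat.Prime.ne_zero Fact.out)⟩

lemma isUnit_iff_not_dvd_val {k : ℕ} (hk : k ≠ 0) (x : ZMod (p^k)) :
    IsUnit x ↔ ¬ p ∣ x.val := by
  haveI : NeZero (p^k) := neZero_pow
  conv_lhs => rw [← ZMod.natCast_zmod_val x]
  rw [ZMod.isUnit_iff_coprime]
  rw [Nat.coprime_pow_right_iff (Nat.pos_of_ne_zero hk)]
  rw [Nat.coprime_comm]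
  exact Nat.Prime.coprime_iff_not_dvd Fact.out

lemma isUnit_intCast {k : ℕ} (hk : k ≠ 0) {A : ℤ} (hA : ¬ (p : ℤ) ∣ A) :
    IsUnit (A : ZMod (p^k)) := by
  haveI : NeZero (p^k) := neZero_pow
  rw [isUnit_iff_not_dvd_val hk]
  intro hdvd
  apply hA
  have h1 : ((p : ℤ)^k) ∣ (A - ((A : ZMod (p^k)).val : ℤ)) := by
    have : ((A - ((A : ZMod (p^k)).val : ℤ) : ℤ) : ZMod (p^k)) = 0 := by
      push_cast
      rw [ZMod.natCast_val, ZMod.cast_id]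
      ring
    rwa [ZMod.intCast_zmod_eq_zero_iff_dvd, Nat.cast_pow] at this
  have h2 : (p : ℤ) ∣ ((A : ZMod (p^k)).val : ℤ) := Int.natCast_dvd_natCast.mpr hdvd
  have h3 : (p : ℤ) ∣ (A - ((A : ZMod (p^k)).val : ℤ)) :=
    dvd_trans (dvd_pow_self _ hk) h1
  have := dvd_add h3 h2
  simpa using this

lemma isUnit_two {k : ℕ} (hodd : Odd p) (hk : k ≠ 0) : IsUnit (2 : ZMod (p^k)) := by
  have h2 : ¬ (p : ℤ) ∣ 2 := by
    intro h
    have hp2 : p ∣ 2 := by exact_mod_cast h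
    have := (Nat.prime_dvd_prime_iff_eq Fact.out Nat.prime_two).mp hp2
    subst this
    simp [Nat.odd_iff] at hodd
  have := isUnit_intCast (p := p) hk h2
  simpa using this

end CSTM
open Finset
namespace CSTM2

variable {p : ℕ} [Fact p.Prime]

def pr (p n : ℕ) [Fact p.Prime] : ZMod (p^(n+1)) →+* ZMod (p^n) :=
  ZMod.castHom (pow_dvd_pow p (Nat.le_succ n)) _

lemma pr_val {n : ℕ} (x : ZMod (p^(n+1))) : pr p n x = ((x.val : ℕ) : ZMod (p^n)) := by
  haveI : NeZero (p^(n+1)) := ⟨pow_ne_zero _ (Nat.Prime.ne_zero Fact.out)⟩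
  conv_lhs => rw [← ZMod.natCast_zmod_val x]
  exact map_natCast _ _

lemma pr_ker_iff {n : ℕ} (x : ZMod (p^(n+1))) : pr p n x = 0 ↔ p^n ∣ x.val := by
  rw [pr_val, ZMod.natCast_eq_zero_iff]

lemma ker_mul_ker {n : ℕ} (hn : 1 ≤ n) {x y : ZMod (p^(n+1))}
    (hx : pr p n x = 0) (hy : pr p n y = 0) : x * y = 0 := by
  haveI : NeZero (p^(n+1)) := ⟨pow_ne_zero _ (Nat.Prime.ne_zero Fact.out)⟩
  rw [pr_ker_iff] at hx hy
  have h : x * y = ((x.val * y.val : ℕ) : ZMod (p^(n+1))) := by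
    rw [Nat.cast_mul, ZMod.natCast_zmod_val, ZMod.natCast_zmod_val]
  rw [h, ZMod.natCast_eq_zero_iff]
  calc p^(n+1) ∣ p^(n+n) := pow_dvd_pow p (by omega)
  _ = p^n * p^n := by rw [pow_add]
  _ ∣ x.val * y.val := mul_dvd_mul hx hy

lemma unit_add_ker {n : ℕ} (hn : 1 ≤ n) {w ε : ZMod (p^(n+1))}
    (hw : IsUnit w) (hε : pr p n ε = 0) : IsUnit (w + ε) := by
  obtain ⟨u, rfl⟩ := hw
  have h2 : ε * ε = 0 := ker_mul_ker hn hε hε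
  apply IsUnit.of_mul_eq_one ((↑u⁻¹ : ZMod (p^(n+1))) - (↑u⁻¹ : ZMod (p^(n+1)))^2 * ε)
  have hu1 : (u : ZMod (p^(n+1))) * ↑u⁻¹ = 1 := u.mul_inv
  linear_combination (1 - (↑u⁻¹ : ZMod (p^(n+1))) * ε) * hu1 - ((↑u⁻¹ : ZMod (p^(n+1))))^2 * h2

lemma lift_unit {n : ℕ} (hn : 1 ≤ n) {x : ZMod (p^(n+1))}
    (h : IsUnit (pr p n x)) : IsUnit x := by
  haveI : NeZero (p^n) := ⟨pow_ne_zero _ (Nat.Prime.ne_zero Fact.out)⟩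
  have h' : ¬ p ∣ (pr p n x).val := by
    rw [← CSTM.isUnit_iff_not_dvd_val (by omega)]
    exact h
  rw [CSTM.isUnit_iff_not_dvd_val (by omega : n + 1 ≠ 0)]
  rw [pr_val, ZMod.val_natCast] at h'
  intro hc
  exact h' ((Nat.dvd_mod_iff (dvd_pow_self p (by omega : n ≠ 0))).mpr hc)

lemma lift_count {n : ℕ} (x₀ : ZMod (p^n)) :
    Nat.card {x : ZMod (p^(n+1)) // pr p n x = x₀} = p := by
  haveI : NeZero (p^(n+1)) := ⟨pow_ne_zero _ (Nat.Prime.ne_zero Fact.out)⟩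
  haveI : NeZero (p^n) := ⟨pow_ne_zero _ (Nat.Prime.ne_zero Fact.out)⟩
  haveI : NeZero p := ⟨Nat.Prime.ne_zero Fact.out⟩
  have hppos : 0 < p^n := Nat.pos_of_ne_zero (pow_ne_zero _ (Nat.Prime.ne_zero Fact.out))
  have key : Nat.card (ZMod p) = Nat.card {x : ZMod (p^(n+1)) // pr p n x = x₀} := by
    apply Nat.card_eq_of_bijective
      (f := fun c => (⟨((x₀.val + p^n * c.val : ℕ) : ZMod (p^(n+1))), by
        rw [pr, map_natCast, Nat.cast_add, Nat.cast_mul, ZMod.natCast_self,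
          zero_mul, add_zero, ZMod.natCast_zmod_val]⟩ :
        {x : ZMod (p^(n+1)) // pr p n x = x₀}))
    constructor
    · intro c₁ c₂ h
      rw [Subtype.mk.injEq, ZMod.natCast_eq_natCast_iff] at h
      have h2 := (Nat.ModEq.add_left_cancel' x₀.val) h
      rw [pow_succ] at h2
      have h3 := Nat.ModEq.mul_left_cancel' hppos.ne' h2
      have e : c₁.val = c₂.val :=
        Nat.ModEq.eq_of_lt_of_lt h3 (ZMod.val_lt c₁) (ZMod.val_lt c₂)
      exact ZMod.val_injective _ e
    · rintro ⟨x, hx⟩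
      set x₁ : ZMod (p^(n+1)) := ((x₀.val : ℕ) : ZMod (p^(n+1))) with hx₁
      have hker : pr p n (x - x₁) = 0 := by
        rw [map_sub, hx, hx₁, map_natCast, ZMod.natCast_zmod_val, sub_self]
      rw [pr_ker_iff] at hker
      set t := (x - x₁).val / (p^n) with ht
      have htp : t < p := by
        rw [ht]
        apply Nat.div_lt_of_lt_mul
        rw [← pow_succ]
        exact ZMod.val_lt _
      refine ⟨(t : ZMod p), ?_⟩
      apply Subtype.ext
      simp only
      have hval : (t : ZMod p).val = t := by
        rw [ZMod.val_natCast, Nat.mod_eq_of_lt htp]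
      rw [hval, Nat.mul_div_cancel' hker, Nat.cast_add, ZMod.natCast_zmod_val, ← hx₁]
      ring
  rw [← key, Nat.card_zmod]

end CSTM2
namespace CSTM3
open CSTM CSTM2

variable {p : ℕ} [Fact p.Prime]

lemma newton {n : ℕ} (hn : 1 ≤ n) (β γ t₁ : ZMod (p^(n+1))) (hu : IsUnit (2*β*t₁))
    (h0 : pr p n (β*t₁^2+γ) = 0) :
    Nat.card {t : ZMod (p^(n+1)) // pr p n t = pr p n t₁ ∧ β*t^2 + γ = 0} = 1 := by
  obtain ⟨W, hW⟩ := hu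
  have hW1 : (2*β*t₁) * (↑W⁻¹ : ZMod (p^(n+1))) = 1 := by rw [← hW]; exact W.mul_inv
  set w' : ZMod (p^(n+1)) := (↑W⁻¹ : ZMod (p^(n+1)))
  have hkerh : pr p n (w' * (β*t₁^2+γ)) = 0 := by rw [map_mul, h0, mul_zero]
  have hsol : β*(t₁ - w' * (β*t₁^2+γ))^2 + γ = 0 := by
    have hk : (w'*(β*t₁^2+γ)) * (w'*(β*t₁^2+γ)) = 0 := ker_mul_ker hn hkerh hkerh
    linear_combination (-(β*t₁^2+γ)) * hW1 + β * hk
  have hproj : pr p n (t₁ - w' * (β*t₁^2+γ)) = pr p n t₁ := by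
    rw [map_sub, hkerh, sub_zero]
  have huniq : ∀ t, pr p n t = pr p n t₁ → β*t^2 + γ = 0 →
      t = t₁ - w' * (β*t₁^2+γ) := by
    intro t hpt hqt
    have hker_k : pr p n (t - (t₁ - w' * (β*t₁^2+γ))) = 0 := by
      rw [map_sub, hpt, hproj, sub_self]
    have hεker : pr p n (β*(t + (t₁ - w' * (β*t₁^2+γ))) - 2*β*t₁) = 0 := by
      have h1 : β*(t + (t₁ - w' * (β*t₁^2+γ))) - 2*β*t₁
          = β * ((t - (t₁ - w' * (β*t₁^2+γ))) + 2*(t₁ - w' * (β*t₁^2+γ)) - 2*t₁) := by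
        ring
      rw [h1, map_mul, map_sub, map_add, hker_k, map_mul, map_mul, hproj, zero_add,
        map_ofNat, sub_self, mul_zero]
    have hunit : IsUnit (β*(t + (t₁ - w' * (β*t₁^2+γ)))) := by
      have h := unit_add_ker hn (hW ▸ W.isUnit) hεker
      have e : 2*β*t₁ + (β*(t + (t₁ - w' * (β*t₁^2+γ))) - 2*β*t₁)
          = β*(t + (t₁ - w' * (β*t₁^2+γ))) := by ring
      rwa [e] at h
    have hzero : (t - (t₁ - w' * (β*t₁^2+γ))) * (β*(t + (t₁ - w' * (β*t₁^2+γ)))) = 0 := by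
      linear_combination hqt - hsol
    have := (hunit.mul_left_eq_zero).mp hzero
    have := sub_eq_zero.mp this
    exact this
  rw [Nat.card_eq_one_iff_unique]
  constructor
  · constructor
    rintro ⟨t, h1, h2⟩ ⟨u, h3, h4⟩
    apply Subtype.ext
    simp only
    rw [huniq t h1 h2, huniq u h3 h4]
  · exact ⟨⟨t₁ - w' * (β*t₁^2+γ), hproj, hsol⟩⟩

end CSTM3
namespace CSTM4
open CSTM CSTM2 CSTM3

lemma card_sigma_nat {ι : Type*} [Fintype ι] (f : ι → Type*) [∀ i, Finite (f i)] :
    Nat.card (Σ i, f i) = ∑ i, Nat.card (f i) := by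
  classical
  letI := fun i => Fintype.ofFinite (f i)
  simp [Nat.card_eq_fintype_card, Fintype.card_sigma]

lemma card_fiber_mul {α β : Type*} [Finite α] [Finite β] (f : α → β) (k : ℕ)
    (h : ∀ b, Nat.card {a // f a = b} = k) : Nat.card α = Nat.card β * k := by
  classical
  letI := Fintype.ofFinite α
  letI := Fintype.ofFinite β
  rw [← Nat.card_congr (Equiv.sigmaFiberEquiv f), card_sigma_nat]
  have h' : ∀ b, Fintype.card {a // f a = b} = k := fun b => by
    rw [← Nat.card_eq_fintype_card]; exact h b
  simp [h', mul_comm, Nat.card_eq_fintype_card]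

lemma card_sigma_ones {ι : Type*} [Finite ι] (f : ι → Type*) (h : ∀ i, Nat.card (f i) = 1) :
    Nat.card (Σ i, f i) = Nat.card ι := by
  haveI : ∀ i, Finite (f i) := fun i => by
    haveI := (Nat.card_eq_one_iff_unique.mp (h i)).1
    exact Finite.of_subsingleton
  letI := Fintype.ofFinite ι
  rw [card_sigma_nat]
  simp [h, Nat.card_eq_fintype_card]

variable {p : ℕ} [Fact p.Prime]

set_option maxHeartbeats 1000000 in
lemma conic_step (hodd : Odd p) {n : ℕ} (hn : 1 ≤ n) {A M : ℤ}
    (hA : ¬(p:ℤ) ∣ A) (hM : ¬(p:ℤ) ∣ M) :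
    Nat.card {w : ZMod (p^(n+1)) × ZMod (p^(n+1)) //
        (A : ZMod (p^(n+1)))*w.1^2 + w.2^2 = (M : ZMod (p^(n+1)))}
    = Nat.card {w : ZMod (p^n) × ZMod (p^n) //
        (A : ZMod (p^n))*w.1^2 + w.2^2 = (M : ZMod (p^n))} * p := by
  haveI : NeZero (p^(n+1)) := ⟨pow_ne_zero _ (Nat.Prime.ne_zero Fact.out)⟩
  haveI : NeZero (p^n) := ⟨pow_ne_zero _ (Nat.Prime.ne_zero Fact.out)⟩
  apply card_fiber_mul
    (f := fun w' : {w : ZMod (p^(n+1)) × ZMod (p^(n+1)) //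
        (A : ZMod (p^(n+1)))*w.1^2 + w.2^2 = (M : ZMod (p^(n+1)))} =>
      (⟨(pr p n w'.1.1, pr p n w'.1.2), by
        simpa only [map_add, map_mul, map_pow, map_intCast] using congrArg (pr p n) w'.2⟩ :
        {w : ZMod (p^n) × ZMod (p^n) // (A : ZMod (p^n))*w.1^2 + w.2^2 = (M : ZMod (p^n))}))
  rintro ⟨⟨x₀, y₀⟩, hb⟩
  -- at least one of x₀, y₀ is a unit
  have hunit_or : IsUnit y₀ ∨ IsUnit x₀ := by
    by_contra hcon
    push_neg at hcon
    obtain ⟨hy, hx⟩ := hcon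
    rw [isUnit_iff_not_dvd_val (by omega : n ≠ 0), not_not] at hy hx
    apply hM
    rw [← ZMod.intCast_zmod_eq_zero_iff_dvd]
    have hx0 : ((x₀.val : ℕ) : ZMod p) = 0 := by
      rw [ZMod.natCast_eq_zero_iff]; exact hx
    have hy0 : ((y₀.val : ℕ) : ZMod p) = 0 := by
      rw [ZMod.natCast_eq_zero_iff]; exact hy
    have hρ := congrArg (ZMod.castHom (dvd_pow_self p (by omega : n ≠ 0)) (ZMod p)) hb
    simp only [map_add, map_mul, map_pow, map_intCast] at hρ
    rw [← ZMod.natCast_zmod_val x₀, ← ZMod.natCast_zmod_val y₀] at hρ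
    rw [map_natCast, map_natCast, hx0, hy0] at hρ
    simpa using hρ.symm
  rcases hunit_or with hy₀ | hx₀
  · -- y₀ unit : fiber over lifts of x₀
    set y₁ : ZMod (p^(n+1)) := ((y₀.val : ℕ) : ZMod (p^(n+1))) with hy₁def
    have hy₁ : pr p n y₁ = y₀ := by
      rw [hy₁def, pr, map_natCast, ZMod.natCast_zmod_val]
    have E1 : {w' : {w : ZMod (p^(n+1)) × ZMod (p^(n+1)) //
          (A : ZMod (p^(n+1)))*w.1^2 + w.2^2 = (M : ZMod (p^(n+1)))} //
          (⟨(pr p n w'.1.1, pr p n w'.1.2), by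
            simpa only [map_add, map_mul, map_pow, map_intCast] using
              congrArg (pr p n) w'.2⟩ :
          {w : ZMod (p^n) × ZMod (p^n) // (A : ZMod (p^n))*w.1^2 + w.2^2 = (M : ZMod (p^n))})
          = ⟨(x₀, y₀), hb⟩}
        ≃ (Σ x : {x : ZMod (p^(n+1)) // pr p n x = x₀},
            {y : ZMod (p^(n+1)) // pr p n y = pr p n y₁ ∧
              (1 : ZMod (p^(n+1)))*y^2 + ((A : ZMod (p^(n+1)))*(x:ZMod (p^(n+1)))^2
                - (M : ZMod (p^(n+1)))) = 0}) :=
      { toFun := fun z => ⟨⟨z.1.1.1, congrArg Prod.fst (Subtype.ext_iff.mp z.2)⟩,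
          ⟨z.1.1.2, by
            rw [hy₁]
            refine ⟨congrArg Prod.snd (Subtype.ext_iff.mp z.2), ?_⟩
            linear_combination z.1.2⟩⟩,
        invFun := fun s => ⟨⟨(s.1.1, s.2.1), by linear_combination s.2.2.2⟩,
          Subtype.ext (Prod.ext s.1.2 (s.2.2.1.trans hy₁))⟩,
        left_inv := fun z => by
          apply Subtype.ext; apply Subtype.ext; rfl,
        right_inv := fun s => by
          rcases s with ⟨⟨x, hx⟩, ⟨y, hy⟩⟩; rfl }
    rw [Nat.card_congr E1]
    rw [card_sigma_ones]
    · exact lift_count x₀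
    · rintro ⟨x, hx⟩
      apply newton hn
      · rw [mul_one]
        exact (isUnit_two hodd (by omega)).mul (lift_unit hn (by rw [hy₁]; exact hy₀))
      · rw [map_add, map_mul, map_sub, map_mul, map_pow, map_pow, map_one,
          map_intCast, map_intCast, hy₁, hx]
        linear_combination hb
  · -- x₀ unit : fiber over lifts of y₀
    set x₁ : ZMod (p^(n+1)) := ((x₀.val : ℕ) : ZMod (p^(n+1))) with hx₁def
    have hx₁ : pr p n x₁ = x₀ := by
      rw [hx₁def, pr, map_natCast, ZMod.natCast_zmod_val]
    have E1 : {w' : {w : ZMod (p^(n+1)) × ZMod (p^(n+1)) //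
          (A : ZMod (p^(n+1)))*w.1^2 + w.2^2 = (M : ZMod (p^(n+1)))} //
          (⟨(pr p n w'.1.1, pr p n w'.1.2), by
            simpa only [map_add, map_mul, map_pow, map_intCast] using
              congrArg (pr p n) w'.2⟩ :
          {w : ZMod (p^n) × ZMod (p^n) // (A : ZMod (p^n))*w.1^2 + w.2^2 = (M : ZMod (p^n))})
          = ⟨(x₀, y₀), hb⟩}
        ≃ (Σ y : {y : ZMod (p^(n+1)) // pr p n y = y₀},
            {x : ZMod (p^(n+1)) // pr p n x = pr p n x₁ ∧
              (A : ZMod (p^(n+1)))*x^2 + ((y:ZMod (p^(n+1)))^2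
                - (M : ZMod (p^(n+1)))) = 0}) :=
      { toFun := fun z => ⟨⟨z.1.1.2, congrArg Prod.snd (Subtype.ext_iff.mp z.2)⟩,
          ⟨z.1.1.1, by
            rw [hx₁]
            refine ⟨congrArg Prod.fst (Subtype.ext_iff.mp z.2), ?_⟩
            linear_combination z.1.2⟩⟩,
        invFun := fun s => ⟨⟨(s.2.1, s.1.1), by linear_combination s.2.2.2⟩,
          Subtype.ext (Prod.ext (s.2.2.1.trans hx₁) s.1.2)⟩,
        left_inv := fun z => by
          apply Subtype.ext; apply Subtype.ext; rfl,
        right_inv := fun s => by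
          rcases s with ⟨⟨y, hy⟩, ⟨x, hx⟩⟩; rfl }
    rw [Nat.card_congr E1]
    rw [card_sigma_ones]
    · exact lift_count y₀
    · rintro ⟨y, hy⟩
      apply newton hn
      · exact ((isUnit_two hodd (by omega)).mul (isUnit_intCast (by omega) hA)).mul
          (lift_unit hn (by rw [hx₁]; exact hx₀))
      · rw [map_add, map_mul, map_sub, map_pow, map_pow,
          map_intCast, map_intCast, hx₁, hy]
        linear_combination hb

end CSTM4
namespace CSTM5
open CSTM CSTM2 CSTM3 CSTM4 Finset

variable {p : ℕ} [Fact p.Prime]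

lemma sq_count (hF : ringChar (ZMod p) ≠ 2) (a : ZMod p) :
    (Nat.card {x : ZMod p // x^2 = a} : ℤ) = quadraticChar (ZMod p) a + 1 := by
  classical
  have h := quadraticChar_card_sqrts hF a
  have h2 : Nat.card {x : ZMod p // x^2 = a} = ({x : ZMod p | x^2 = a}).toFinset.card := by
    rw [← Set.ncard_eq_toFinset_card', ← Nat.card_coe_set_eq]
    rfl
  rw [h2]
  exact_mod_cast h

lemma conic_base (hodd : Odd p) (α m : ZMod p) (hα : α ≠ 0) (hm : m ≠ 0) :
    (Nat.card {w : ZMod p × ZMod p // α*w.1^2 + w.2^2 = m} : ℤ)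
      = p - quadraticChar (ZMod p) (-α) := by
  classical
  have hp2 : p ≠ 2 := by rintro rfl; simp [Nat.odd_iff] at hodd
  have hF : ringChar (ZMod p) ≠ 2 := by rw [ZMod.ringChar_zmod_n]; exact hp2
  set χ := quadraticChar (ZMod p) with hχ
  -- decompose the count
  have E : {w : ZMod p × ZMod p // α*w.1^2 + w.2^2 = m}
      ≃ Σ t : ZMod p, ({x : ZMod p // α*x^2 = t} × {y : ZMod p // y^2 = m - t}) :=
    { toFun := fun w => ⟨α*w.1.1^2, ⟨w.1.1, rfl⟩, ⟨w.1.2, by linear_combination w.2⟩⟩,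
      invFun := fun s => ⟨(s.2.1.1, s.2.2.1), by linear_combination s.2.1.2 + s.2.2.2⟩,
      left_inv := fun w => rfl,
      right_inv := fun s => by
        rcases s with ⟨t, ⟨x, hx⟩, ⟨y, hy⟩⟩
        subst hx
        rfl }
  have cx : ∀ t : ZMod p, (Nat.card {x : ZMod p // α*x^2 = t} : ℤ) = χ (α⁻¹*t) + 1 := by
    intro t
    have E2 : {x : ZMod p // α*x^2 = t} ≃ {x : ZMod p // x^2 = α⁻¹*t} :=
      Equiv.subtypeEquivRight (fun x => by
        constructor
        · intro h; field_simp [hα]; linear_combination h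
        · intro h; field_simp [hα] at h; linear_combination h)
    rw [Nat.card_congr E2]
    exact sq_count hF _
  have cy : ∀ t : ZMod p, (Nat.card {y : ZMod p // y^2 = m - t} : ℤ) = χ (m - t) + 1 :=
    fun t => sq_count hF _
  have hcard : (Nat.card {w : ZMod p × ZMod p // α*w.1^2 + w.2^2 = m} : ℤ)
      = ∑ t : ZMod p, (χ (α⁻¹*t) + 1) * (χ (m - t) + 1) := by
    rw [Nat.card_congr E, card_sigma_nat]
    push_cast
    refine Finset.sum_congr rfl (fun t _ => ?_)
    rw [Nat.card_prod]
    push_cast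
    rw [cx t, cy t]
  rw [hcard]
  -- expand the sum
  have expand : ∀ t : ZMod p, ((χ (α⁻¹*t) + 1) * (χ (m - t) + 1) : ℤ)
      = χ α⁻¹ * (χ t * χ (m - t)) + χ (α⁻¹*t) + χ (m - t) + 1 := by
    intro t
    have : χ (α⁻¹*t) = χ α⁻¹ * χ t := map_mul χ _ _
    rw [this]
    ring
  rw [Finset.sum_congr rfl (fun t _ => expand t)]
  rw [Finset.sum_add_distrib, Finset.sum_add_distrib, Finset.sum_add_distrib, ← Finset.mul_sum]
  -- the linear sums vanish
  have hsum1 : ∑ t : ZMod p, (χ (α⁻¹*t) : ℤ) = 0 := by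
    have h := Equiv.sum_comp (Equiv.mulLeft₀ α⁻¹ (inv_ne_zero hα)) (fun t => (χ t : ℤ))
    simp only [Equiv.mulLeft₀_apply] at h
    rw [h]
    exact quadraticChar_sum_zero hF
  have hsum2 : ∑ t : ZMod p, (χ (m - t) : ℤ) = 0 := by
    have h := Equiv.sum_comp (Equiv.subLeft m) (fun t => (χ t : ℤ))
    simp only [Equiv.subLeft_apply] at h
    rw [h]
    exact quadraticChar_sum_zero hF
  -- the jacobi sum
  have hJ : ∑ t : ZMod p, (χ t * χ (m - t) : ℤ) = - χ (-1) := by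
    have h := Equiv.sum_comp (Equiv.mulLeft₀ m hm) (fun t => (χ t * χ (m - t) : ℤ))
    simp only [Equiv.mulLeft₀_apply] at h
    rw [← h]
    have hterm : ∀ u : ZMod p, (χ (m*u) * χ (m - m*u) : ℤ) = χ u * χ (1 - u) := by
      intro u
      have hmu : m - m*u = m*(1-u) := by ring
      rw [hmu, map_mul, map_mul]
      have hsq : (χ m : ℤ) * χ m = 1 := by
        have := quadraticChar_sq_one hm
        rwa [pow_two] at this
      linear_combination (χ u * χ (1-u) : ℤ) * hsq
    rw [Finset.sum_congr rfl (fun u _ => hterm u)]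
    have hjac : ∑ u : ZMod p, (χ u * χ (1 - u) : ℤ) = jacobiSum χ χ := rfl
    rw [hjac, hχ]
    nth_rewrite 2 [← (quadraticChar_isQuadratic (ZMod p)).inv]
    exact jacobiSum_nontrivial_inv (quadraticChar_ne_one hF)
  rw [hsum1, hsum2, hJ]
  -- remaining arithmetic
  have hcount : ∑ _t : ZMod p, (1 : ℤ) = p := by
    simp [Finset.card_univ, ZMod.card]
  rw [hcount]
  have h1 : (χ α⁻¹ : ℤ) = χ α := by
    have h2 : (χ α : ℤ) * χ α⁻¹ = 1 := by
      rw [← map_mul, mul_inv_cancel₀ hα, MulChar.map_one]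
    rcases quadraticChar_dichotomy hα with h | h <;>
      rcases quadraticChar_dichotomy (inv_ne_zero hα) with h' | h' <;>
      rw [← hχ] at h h' <;> rw [h, h'] at h2 ⊢ <;> norm_num at h2
  have h3 : (χ α : ℤ) * χ (-1) = χ (-α) := by
    rw [← map_mul]
    ring_nf
  rw [h1]
  linear_combination -h3

end CSTM5
namespace CSTM6
open CSTM CSTM2 CSTM3 CSTM4 CSTM5

variable {p : ℕ} [Fact p.Prime]

lemma conic_count (hodd : Odd p) {A M : ℤ} (hA : ¬(p:ℤ) ∣ A) (hM : ¬(p:ℤ) ∣ M) :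
    ∀ n : ℕ, 1 ≤ n →
    (Nat.card {w : ZMod (p^n) × ZMod (p^n) //
        (A : ZMod (p^n))*w.1^2 + w.2^2 = (M : ZMod (p^n))} : ℤ)
      = (p:ℤ)^(n-1) * ((p:ℤ) - quadraticChar (ZMod p) ((-A : ℤ) : ZMod p)) := by
  intro n
  induction n with
  | zero => omega
  | succ k ih =>
    intro _
    rcases Nat.eq_zero_or_pos k with hk | hk
    · subst hk
      have hα : ((A : ℤ) : ZMod p) ≠ 0 := by
        rw [Ne, ZMod.intCast_zmod_eq_zero_iff_dvd]; exact hA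
      have hm : ((M : ℤ) : ZMod p) ≠ 0 := by
        rw [Ne, ZMod.intCast_zmod_eq_zero_iff_dvd]; exact hM
      have hbase := conic_base hodd ((A : ℤ) : ZMod p) ((M : ℤ) : ZMod p) hα hm
      have hcast : ((-A : ℤ) : ZMod p) = -((A : ℤ) : ZMod p) := by push_cast; ring
      have e0 : ZMod (p^(0+1)) ≃+* ZMod p := ZMod.ringEquivCongr (by norm_num)
      have E : {w : ZMod (p^(0+1)) × ZMod (p^(0+1)) //
            (A : ZMod (p^(0+1)))*w.1^2 + w.2^2 = (M : ZMod (p^(0+1)))}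
          ≃ {w : ZMod p × ZMod p //
            ((A : ℤ) : ZMod p)*w.1^2 + w.2^2 = ((M : ℤ) : ZMod p)} :=
        { toFun := fun w => ⟨(e0 w.1.1, e0 w.1.2), by
            have := congrArg e0 w.2
            simpa only [map_add, map_mul, map_pow, map_intCast, map_zero] using this⟩,
          invFun := fun w => ⟨(e0.symm w.1.1, e0.symm w.1.2), by
            have := congrArg e0.symm w.2
            simpa only [map_add, map_mul, map_pow, map_intCast, map_zero] using this⟩,
          left_inv := fun w => by
            apply Subtype.ext
            simp,
          right_inv := fun w => by
            apply Subtype.ext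
            simp }
      rw [Nat.card_congr E, hbase, hcast]
      norm_num
    · have ih' := ih hk
      have hstep := conic_step hodd hk hA hM (p := p)
      rw [hstep, Nat.cast_mul, ih']
      have h1 : k + 1 - 1 = (k - 1) + 1 := by omega
      rw [h1, pow_succ]
      ring

end CSTM6
open CSTM CSTM2 CSTM3 CSTM4 CSTM5 CSTM6

set_option maxHeartbeats 1000000 in
/-- The number of triples `(x,y,z) ∈ (ℤ/pⁿℤ)³` with
`Q(x,y,z) = ax²+bxy+cy²+dxz+eyz+fz² ≡ 0 (mod pⁿ)` and `z` invertible equals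
`p^{2n−2}(p−1)(p − χ(b²−4ac))`. -/
theorem count_solutions_ternary_mod_prime_power
    (p : ℕ) [Fact p.Prime] (hodd : Odd p) (n : ℕ) (hn : 1 ≤ n)
    (a b c d e f : ℤ)
    (ha : ¬ (p : ℤ) ∣ a) (hb : ¬ (p : ℤ) ∣ (4*a*c - b^2))
    (hΔ : ¬ (p : ℤ) ∣ (8*a*c*f + 2*b*d*e - 2*a*e^2 - 2*c*d^2 - 2*f*b^2)) :
    (Nat.card {v : ZMod (p^n) × ZMod (p^n) × ZMod (p^n) //
        (a : ZMod (p^n))*v.1^2 + b*v.1*v.2.1 + c*v.2.1^2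
          + d*v.1*v.2.2 + e*v.2.1*v.2.2 + f*v.2.2^2 = 0 ∧ IsUnit v.2.2} : ℤ)
      = (p : ℤ)^(2*n - 2) * ((p : ℤ) - 1) * ((p : ℤ) - legendreSym p (b^2 - 4*a*c)) := by
  classical
  haveI : NeZero (p^n) := ⟨pow_ne_zero _ (Nat.Prime.ne_zero Fact.out)⟩
  have hnne : n ≠ 0 := by omega
  have hpZ : Prime ((p : ℕ) : ℤ) := Nat.prime_iff_prime_int.mp Fact.out
  have hp1 : 1 ≤ p := (Nat.Prime.one_lt (Fact.out : p.Prime)).le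
  have hp2 : ¬ (p : ℤ) ∣ 2 := by
    intro h
    have h2 : p ∣ 2 := by exact_mod_cast h
    have := (Nat.prime_dvd_prime_iff_eq Fact.out Nat.prime_two).mp h2
    subst this; simp [Nat.odd_iff] at hodd
  -- divisibility facts
  have h4 : ¬ (p : ℤ) ∣ 4 := by
    intro h
    have h44 : (4 : ℤ) = 2 * 2 := by norm_num
    rw [h44] at h
    rcases hpZ.dvd_mul.mp h with h' | h' <;> exact hp2 h'
  have h8 : ¬ (p : ℤ) ∣ 8 := by
    intro h
    have h88 : (8 : ℤ) = 2 * 4 := by norm_num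
    rw [h88] at h
    rcases hpZ.dvd_mul.mp h with h' | h'
    · exact hp2 h'
    · exact h4 h'
  have hAA : ¬ (p : ℤ) ∣ (4*(4*a*c - b^2)) := by
    intro h
    rcases hpZ.dvd_mul.mp h with h' | h'
    · exact h4 h'
    · exact hb h'
  have hMM : ¬ (p : ℤ) ∣ (-(8*a*(8*a*c*f + 2*b*d*e - 2*a*e^2 - 2*c*d^2 - 2*f*b^2))) := by
    rw [dvd_neg]
    intro h
    rcases hpZ.dvd_mul.mp h with h' | h'
    · rcases hpZ.dvd_mul.mp h' with h'' | h''
      · exact h8 h''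
      · exact ha h''
    · exact hΔ h'
  have hu2a : IsUnit ((2*a : ℤ) : ZMod (p^n)) := by
    apply isUnit_intCast hnne
    intro h
    rcases hpZ.dvd_mul.mp h with h' | h' <;> [exact hp2 h'; exact ha h']
  have hu2D : IsUnit ((2*(4*a*c - b^2) : ℤ) : ZMod (p^n)) := by
    apply isUnit_intCast hnne
    intro h
    rcases hpZ.dvd_mul.mp h with h' | h' <;> [exact hp2 h'; exact hb h']
  have hu16 : IsUnit ((16*a*(4*a*c - b^2) : ℤ) : ZMod (p^n)) := by
    apply isUnit_intCast hnne
    intro h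
    rcases hpZ.dvd_mul.mp h with h' | h'
    · rcases hpZ.dvd_mul.mp h' with h'' | h''
      · have h16 : (16 : ℤ) = 2^4 := by norm_num
        rw [h16] at h''
        exact hp2 (hpZ.dvd_of_dvd_pow h'')
      · exact ha h''
    · exact hb h'
  -- Step 1 : factor off the unit z
  set Φ : {z : ZMod (p^n) // IsUnit z} ×
      {w : ZMod (p^n) × ZMod (p^n) //
        (a : ZMod (p^n))*w.1^2 + b*w.1*w.2 + c*w.2^2 + d*w.1 + e*w.2 + f = 0} →
      {v : ZMod (p^n) × ZMod (p^n) × ZMod (p^n) //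
        (a : ZMod (p^n))*v.1^2 + b*v.1*v.2.1 + c*v.2.1^2
          + d*v.1*v.2.2 + e*v.2.1*v.2.2 + f*v.2.2^2 = 0 ∧ IsUnit v.2.2} :=
    fun zw => ⟨(zw.2.1.1 * zw.1.1, zw.2.1.2 * zw.1.1, zw.1.1),
      ⟨by linear_combination ((zw.1.1 : ZMod (p^n))^2) * zw.2.2, zw.1.2⟩⟩ with hΦdef
  have hΦ : Function.Bijective Φ := by
    constructor
    · rintro ⟨⟨z₁, hz₁⟩, ⟨⟨u₁, v₁⟩, hq₁⟩⟩ ⟨⟨z₂, hz₂⟩, ⟨⟨u₂, v₂⟩, hq₂⟩⟩ h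
      have hval := Subtype.ext_iff.mp h
      rw [hΦdef] at hval
      simp only [Prod.ext_iff] at hval
      obtain ⟨h1, h2, h3⟩ := hval
      subst h3
      rw [mul_comm u₁, mul_comm u₂] at h1
      rw [mul_comm v₁, mul_comm v₂] at h2
      have hu := hz₁.mul_left_cancel h1
      have hv := hz₁.mul_left_cancel h2
      subst hu; subst hv
      rfl
    · rintro ⟨⟨x, y, z⟩, hQ, hz⟩
      dsimp only at hQ hz
      obtain ⟨zu, hzu⟩ := hz
      have hinv : z * (↑zu⁻¹ : ZMod (p^n)) = 1 := by rw [← hzu]; exact zu.mul_inv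
      have hx : (x * ↑zu⁻¹) * z = x := by linear_combination x * hinv
      have hy : (y * ↑zu⁻¹) * z = y := by linear_combination y * hinv
      have hq0 : (a : ZMod (p^n))*(x * ↑zu⁻¹)^2 + b*(x * ↑zu⁻¹)*(y * ↑zu⁻¹)
          + c*(y * ↑zu⁻¹)^2 + d*(x * ↑zu⁻¹) + e*(y * ↑zu⁻¹) + f = 0 := by
        rw [← hx, ← hy] at hQ
        have h2 : z^2 * ((a : ZMod (p^n))*(x * ↑zu⁻¹)^2 + b*(x * ↑zu⁻¹)*(y * ↑zu⁻¹)
            + c*(y * ↑zu⁻¹)^2 + d*(x * ↑zu⁻¹) + e*(y * ↑zu⁻¹) + f) = 0 := by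
          linear_combination hQ
        have hzsq : IsUnit (z^2) := (hzu ▸ zu.isUnit).pow 2
        exact (hzsq.mul_right_eq_zero).mp h2
      refine ⟨⟨⟨z, hzu ▸ zu.isUnit⟩, ⟨(x * ↑zu⁻¹, y * ↑zu⁻¹), hq0⟩⟩, ?_⟩
      rw [hΦdef]
      apply Subtype.ext
      exact Prod.ext hx (Prod.ext hy rfl)
  -- Step 2 : complete the square
  set Ψ : {w : ZMod (p^n) × ZMod (p^n) //
        (a : ZMod (p^n))*w.1^2 + b*w.1*w.2 + c*w.2^2 + d*w.1 + e*w.2 + f = 0} →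
      {w : ZMod (p^n) × ZMod (p^n) //
        ((4*(4*a*c - b^2) : ℤ) : ZMod (p^n))*w.1^2 + w.2^2
          = ((-(8*a*(8*a*c*f + 2*b*d*e - 2*a*e^2 - 2*c*d^2 - 2*f*b^2)) : ℤ) : ZMod (p^n))} :=
    fun w => ⟨(2*(a : ZMod (p^n))*w.1.1 + (b : ZMod (p^n))*w.1.2 + (d : ZMod (p^n)),
        2*((4*a*c - b^2 : ℤ) : ZMod (p^n))*w.1.2 + ((4*a*e - 2*b*d : ℤ) : ZMod (p^n))), by
      push_cast
      linear_combination (16*(a : ZMod (p^n))*(4*(a : ZMod (p^n))*(c : ZMod (p^n))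
        - (b : ZMod (p^n))^2)) * w.2⟩ with hΨdef
  have hΨ : Function.Bijective Ψ := by
    constructor
    · rintro ⟨⟨u₁, v₁⟩, hq₁⟩ ⟨⟨u₂, v₂⟩, hq₂⟩ h
      have hval := Subtype.ext_iff.mp h
      rw [hΨdef] at hval
      simp only [Prod.ext_iff] at hval
      obtain ⟨h1, h2⟩ := hval
      have h3 : ((2*(4*a*c - b^2) : ℤ) : ZMod (p^n)) * (v₁ - v₂) = 0 := by
        push_cast
        push_cast at h2
        linear_combination h2
      have hv : v₁ = v₂ := by
        have := (hu2D.mul_right_eq_zero).mp h3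
        exact sub_eq_zero.mp this
      subst hv
      have h4 : ((2*a : ℤ) : ZMod (p^n)) * (u₁ - u₂) = 0 := by
        push_cast
        linear_combination h1
      have hu : u₁ = u₂ := by
        have := (hu2a.mul_right_eq_zero).mp h4
        exact sub_eq_zero.mp this
      subst hu
      rfl
    · rintro ⟨⟨X, Y⟩, hXY⟩
      obtain ⟨U1, hU1⟩ := hu2a
      obtain ⟨U2, hU2⟩ := hu2D
      have hj1 : ((2*a : ℤ) : ZMod (p^n)) * (↑U1⁻¹ : ZMod (p^n)) = 1 := by
        rw [← hU1]; exact U1.mul_inv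
      have hj2 : ((2*(4*a*c - b^2) : ℤ) : ZMod (p^n)) * (↑U2⁻¹ : ZMod (p^n)) = 1 := by
        rw [← hU2]; exact U2.mul_inv
      set v0 : ZMod (p^n) :=
        (↑U2⁻¹ : ZMod (p^n)) * (Y - ((4*a*e - 2*b*d : ℤ) : ZMod (p^n))) with hv0def
      set u0 : ZMod (p^n) :=
        (↑U1⁻¹ : ZMod (p^n)) * (X - (b : ZMod (p^n))*v0 - (d : ZMod (p^n))) with hu0def
      have hYeq : 2*((4*a*c - b^2 : ℤ) : ZMod (p^n))*v0
          + ((4*a*e - 2*b*d : ℤ) : ZMod (p^n)) = Y := by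
        rw [hv0def]
        push_cast
        push_cast at hj2
        linear_combination (Y - (4*(a : ZMod (p^n))*(e : ZMod (p^n))
          - 2*(b : ZMod (p^n))*(d : ZMod (p^n)))) * hj2
      have hXeq : 2*(a : ZMod (p^n))*u0 + (b : ZMod (p^n))*v0 + (d : ZMod (p^n)) = X := by
        rw [hu0def]
        push_cast at hj1
        linear_combination (X - (b : ZMod (p^n))*v0 - (d : ZMod (p^n))) * hj1
      have h16 : ((16*a*(4*a*c - b^2) : ℤ) : ZMod (p^n)) *
          ((a : ZMod (p^n))*u0^2 + b*u0*v0 + c*v0^2 + d*u0 + e*v0 + f) = 0 := by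
        rw [← hXeq, ← hYeq] at hXY
        push_cast
        push_cast at hXY
        linear_combination hXY
      have hq0 := (hu16.mul_right_eq_zero).mp h16
      refine ⟨⟨(u0, v0), hq0⟩, ?_⟩
      rw [hΨdef]
      apply Subtype.ext
      exact Prod.ext hXeq hYeq
  -- cardinalities
  have hcard1 : (Nat.card {v : ZMod (p^n) × ZMod (p^n) × ZMod (p^n) //
        (a : ZMod (p^n))*v.1^2 + b*v.1*v.2.1 + c*v.2.1^2
          + d*v.1*v.2.2 + e*v.2.1*v.2.2 + f*v.2.2^2 = 0 ∧ IsUnit v.2.2} : ℤ)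
      = (Nat.card {z : ZMod (p^n) // IsUnit z} : ℤ) *
        (Nat.card {w : ZMod (p^n) × ZMod (p^n) //
          (a : ZMod (p^n))*w.1^2 + b*w.1*w.2 + c*w.2^2 + d*w.1 + e*w.2 + f = 0} : ℤ) := by
    have h := (Nat.card_eq_of_bijective Φ hΦ).symm
    rw [Nat.card_prod] at h
    exact_mod_cast congrArg (Nat.cast : ℕ → ℤ) h
  have hcard2 : Nat.card {w : ZMod (p^n) × ZMod (p^n) //
        (a : ZMod (p^n))*w.1^2 + b*w.1*w.2 + c*w.2^2 + d*w.1 + e*w.2 + f = 0}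
      = Nat.card {w : ZMod (p^n) × ZMod (p^n) //
        ((4*(4*a*c - b^2) : ℤ) : ZMod (p^n))*w.1^2 + w.2^2
          = ((-(8*a*(8*a*c*f + 2*b*d*e - 2*a*e^2 - 2*c*d^2 - 2*f*b^2)) : ℤ) : ZMod (p^n))} :=
    Nat.card_eq_of_bijective Ψ hΨ
  have hunits : Nat.card {z : ZMod (p^n) // IsUnit z} = (p^n).totient := by
    have e : (ZMod (p^n))ˣ ≃ {z : ZMod (p^n) // IsUnit z} :=
      { toFun := fun u => ⟨u, u.isUnit⟩,
        invFun := fun z => z.2.unit,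
        left_inv := fun u => Units.ext u.isUnit.unit_spec,
        right_inv := fun z => Subtype.ext z.2.unit_spec }
    rw [← Nat.card_congr e, Nat.card_eq_fintype_card, ZMod.card_units_eq_totient]
  have htot : (((p^n).totient : ℕ) : ℤ) = (p : ℤ)^(n-1) * ((p : ℤ) - 1) := by
    rw [Nat.totient_prime_pow Fact.out (by omega : 0 < n)]
    push_cast [Nat.cast_sub hp1]
    ring
  have hconic := conic_count hodd hAA hMM n hn
  have hleg : quadraticChar (ZMod p) (((-(4*(4*a*c - b^2))) : ℤ) : ZMod p)
      = legendreSym p (b^2 - 4*a*c) := by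
    have h0 : legendreSym p (-(4*(4*a*c - b^2)))
        = quadraticChar (ZMod p) (((-(4*(4*a*c - b^2))) : ℤ) : ZMod p) := rfl
    rw [← h0]
    have h1 : (-(4*(4*a*c - b^2)) : ℤ) = 2^2 * (b^2 - 4*a*c) := by ring
    rw [h1, legendreSym.mul, legendreSym.sq_one' (p := p) (a := 2), one_mul]
    rw [Ne, ZMod.intCast_zmod_eq_zero_iff_dvd]
    exact hp2
  rw [hcard1, hcard2, hconic, hunits, htot, hleg]
  have hpow : (p : ℤ)^(n-1) * (p : ℤ)^(n-1) = (p : ℤ)^(2*n-2) := by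
    rw [← pow_add]; congr 1; omega
  rw [← hpow]
  ring
end

section
/- Let p be an odd prime with p ∤ a, p ∤ (4ac − b²), p ∤ 8Δ. Then the congruence Q(x,y,z) ≡ 0 (mod p) with p ∤ z has (p−1)(p − χ(b²−4ac)) solutions in (ℤ/pℤ)³; in particular, since p − χ(b²−4ac) ≥ p − 1 ≥ 2, a solution with p ∤ z always exists. -/
open Finset

variable {F : Type*} [Field F] [Fintype F] [DecidableEq F]

private lemma aux_sq_card (hF : ringChar F ≠ 2) (t : F) :
    (((univ.filter fun x : F => x ^ 2 = t)).card : ℤ) = quadraticChar F t + 1 := by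
  have h := quadraticChar_card_sqrts hF t
  rw [← h]
  congr 1
  simp [Set.toFinset_setOf]

private lemma aux_sum_shift (D : F) :
    ∑ t : F, quadraticChar F (t - D) = ∑ t : F, quadraticChar F t :=
  Fintype.sum_equiv (Equiv.subRight D) _ _ (fun _ => rfl)

private lemma aux_sum_sq_sub (hF : ringChar F ≠ 2) {D : F} (hD : D ≠ 0) :
    ∑ u : F, quadraticChar F (u ^ 2 - D) = -1 := by
  have key : ∑ u : F, quadraticChar F (u ^ 2 - D)
      = ∑ t : F, ((quadraticChar F t + 1) * quadraticChar F (t - D)) := by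
    rw [← Finset.sum_fiberwise univ (fun u : F => u ^ 2)
      (fun u => quadraticChar F (u ^ 2 - D))]
    refine Finset.sum_congr rfl fun t _ => ?_
    have hc : ∀ u ∈ univ.filter (fun u : F => u ^ 2 = t),
        quadraticChar F (u ^ 2 - D) = quadraticChar F (t - D) := by
      intro u hu
      rw [Finset.mem_filter] at hu
      rw [hu.2]
    rw [Finset.sum_congr rfl hc, Finset.sum_const, nsmul_eq_mul, aux_sq_card hF t]
  rw [key]
  simp only [add_mul, one_mul]
  rw [Finset.sum_add_distrib, aux_sum_shift, quadraticChar_sum_zero hF, add_zero]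
  have h1 : ∀ t : F, quadraticChar F t * quadraticChar F (t - D)
      = quadraticChar F (t * (t - D)) := fun t => (map_mul _ _ _).symm
  simp only [h1]
  rw [← Finset.add_sum_erase univ _ (Finset.mem_univ (0 : F))]
  rw [show (0 : F) * (0 - D) = 0 by ring, MulChar.map_zero, zero_add]
  have h2 : ∀ t ∈ univ.erase (0 : F),
      quadraticChar F (t * (t - D)) = quadraticChar F (1 - D * t⁻¹) := by
    intro t ht
    have ht0 : t ≠ 0 := Finset.ne_of_mem_erase ht
    have : t * (t - D) = t ^ 2 * (1 - D * t⁻¹) := by field_simp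
    rw [this, map_mul, map_pow, quadraticChar_sq_one ht0, one_mul]
  rw [Finset.sum_congr rfl h2]
  have h3 : ∑ t ∈ univ.erase (0 : F), quadraticChar F (1 - D * t⁻¹)
      = ∑ v ∈ univ.erase (1 : F), quadraticChar F v := by
    apply Finset.sum_nbij' (i := fun t => 1 - D * t⁻¹) (j := fun v => D * (1 - v)⁻¹)
    · intro t ht
      have ht0 : t ≠ 0 := Finset.ne_of_mem_erase ht
      simp only [Finset.mem_erase, Finset.mem_univ, and_true]
      intro h
      apply hD
      have : D * t⁻¹ = 0 := by linear_combination -h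
      rcases mul_eq_zero.mp this with h' | h'
      · exact h'
      · exact absurd (inv_eq_zero.mp h') ht0
    · intro v hv
      have hv1 : v ≠ 1 := Finset.ne_of_mem_erase hv
      simp only [Finset.mem_erase, Finset.mem_univ, and_true]
      exact mul_ne_zero hD (inv_ne_zero (sub_ne_zero.mpr (Ne.symm hv1)))
    · intro t ht
      have ht0 : t ≠ 0 := Finset.ne_of_mem_erase ht
      field_simp
      rw [sub_sub_cancel, div_self hD]
    · intro v hv
      have hv1 : v ≠ 1 := Finset.ne_of_mem_erase hv
      have : (1 : F) - v ≠ 0 := sub_ne_zero.mpr (Ne.symm hv1)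
      field_simp
      ring
    · intro t ht; rfl
  rw [h3]
  have h4 := quadraticChar_sum_zero hF
  rw [← Finset.add_sum_erase univ _ (Finset.mem_univ (1 : F))] at h4
  rw [map_one] at h4
  linarith

private lemma aux_sum_quadratic (hF : ringChar F ≠ 2) {α : F} (β γ : F) (hα : α ≠ 0)
    (hD : β ^ 2 - 4 * α * γ ≠ 0) :
    ∑ x : F, quadraticChar F (α * x ^ 2 + β * x + γ) = -(quadraticChar F α) := by
  have h2 : (2 : F) ≠ 0 := Ring.two_ne_zero hF
  have h2a : 2 * α ≠ 0 := mul_ne_zero h2 hα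
  have key : ∀ x : F, quadraticChar F (4 * α) * quadraticChar F (α * x ^ 2 + β * x + γ)
      = quadraticChar F ((2 * α * x + β) ^ 2 - (β ^ 2 - 4 * α * γ)) := by
    intro x
    rw [← map_mul]
    congr 1
    ring
  have hsum : quadraticChar F (4 * α) * ∑ x : F, quadraticChar F (α * x ^ 2 + β * x + γ)
      = ∑ u : F, quadraticChar F (u ^ 2 - (β ^ 2 - 4 * α * γ)) := by
    rw [Finset.mul_sum]
    rw [Finset.sum_congr rfl (fun x _ => key x)]
    exact Fintype.sum_bijective (fun x => 2 * α * x + β)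
      ((Equiv.mulLeft₀ (2 * α) h2a).trans (Equiv.addRight β)).bijective _ _ (fun _ => rfl)
  rw [aux_sum_sq_sub hF hD] at hsum
  have h4 : quadraticChar F (4 * α) = quadraticChar F α := by
    rw [show (4 : F) * α = 2 ^ 2 * α by ring, map_mul, map_pow,
      quadraticChar_sq_one h2, one_mul]
  rw [h4] at hsum
  have hsq : quadraticChar F α * quadraticChar F α = 1 := by
    have := quadraticChar_sq_one hα
    rwa [sq] at this
  calc ∑ x : F, quadraticChar F (α * x ^ 2 + β * x + γ)
      = quadraticChar F α * quadraticChar F α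
        * ∑ x : F, quadraticChar F (α * x ^ 2 + β * x + γ) := by rw [hsq, one_mul]
    _ = quadraticChar F α * (-1) := by rw [mul_assoc, hsum]
    _ = -(quadraticChar F α) := by ring

private lemma aux_card_quadratic (hF : ringChar F ≠ 2) {α : F} (β γ : F) (hα : α ≠ 0) :
    (((univ.filter fun x : F => α * x ^ 2 + β * x + γ = 0)).card : ℤ)
      = quadraticChar F (β ^ 2 - 4 * α * γ) + 1 := by
  have h2 : (2 : F) ≠ 0 := Ring.two_ne_zero hF
  have h2a : 2 * α ≠ 0 := mul_ne_zero h2 hα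
  have h4a : (4 : F) * α ≠ 0 := mul_ne_zero (by rw [show (4:F) = 2*2 by norm_num]; exact mul_ne_zero h2 h2) hα
  have hiff : ∀ x : F, (α * x ^ 2 + β * x + γ = 0)
      ↔ ((2 * α * x + β) ^ 2 = β ^ 2 - 4 * α * γ) := by
    intro x
    constructor
    · intro h; linear_combination (4 * α) * h
    · intro h
      have h4 : 4 * α * (α * x ^ 2 + β * x + γ) = 0 := by linear_combination h
      rcases mul_eq_zero.mp h4 with h' | h'
      · exact absurd h' h4a
      · exact h'
  rw [Finset.filter_congr (fun x _ => hiff x)]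
  rw [show (univ.filter fun x : F => (2 * α * x + β) ^ 2 = β ^ 2 - 4 * α * γ).card
      = (univ.filter fun u : F => u ^ 2 = β ^ 2 - 4 * α * γ).card from
    Finset.card_nbij' (fun x => 2 * α * x + β) (fun u => (u - β) / (2 * α))
      (by intro x hx; rw [Finset.mem_coe, Finset.mem_filter] at hx ⊢; exact ⟨Finset.mem_univ _, hx.2⟩)
      (by intro u hu; rw [Finset.mem_coe, Finset.mem_filter] at hu ⊢
          refine ⟨Finset.mem_univ _, ?_⟩
          rw [show 2 * α * ((u - β) / (2 * α)) + β = u by field_simp <;> ring]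
          exact hu.2)
      (by intro x _; field_simp; ring)
      (by intro u _; field_simp; ring)]
  exact aux_sq_card hF _

/-- The congruence `Q(x,y,z) ≡ 0 (mod p)` with `p ∤ z` has
`(p−1)(p − χ(b²−4ac))` solutions in `(ℤ/pℤ)³`; in particular a solution with
`p ∤ z` always exists. -/
theorem count_and_exists_solutions_ternary_mod_prime
    (p : ℕ) [Fact p.Prime] (hodd : Odd p)
    (a b c d e f : ℤ)
    (ha : ¬ (p : ℤ) ∣ a) (hb : ¬ (p : ℤ) ∣ (4*a*c - b^2))
    (hΔ : ¬ (p : ℤ) ∣ (8*a*c*f + 2*b*d*e - 2*a*e^2 - 2*c*d^2 - 2*f*b^2)) :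
    (Nat.card {v : ZMod p × ZMod p × ZMod p //
        (a : ZMod p)*v.1^2 + b*v.1*v.2.1 + c*v.2.1^2
          + d*v.1*v.2.2 + e*v.2.1*v.2.2 + f*v.2.2^2 = 0 ∧ v.2.2 ≠ 0} : ℤ)
      = ((p : ℤ) - 1) * ((p : ℤ) - legendreSym p (b^2 - 4*a*c)) ∧
    ∃ x y z : ZMod p,
      (a : ZMod p)*x^2 + b*x*y + c*y^2 + d*x*z + e*y*z + f*z^2 = 0 ∧ z ≠ 0 := by
  have hp : p.Prime := Fact.out
  have hp2 : p ≠ 2 := by rintro rfl; simp [Nat.odd_iff] at hodd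
  have hF : ringChar (ZMod p) ≠ 2 := by rw [ZMod.ringChar_zmod_n]; exact hp2
  have h2 : (2 : ZMod p) ≠ 0 := Ring.two_ne_zero hF
  have haF : (a : ZMod p) ≠ 0 := fun h => ha ((ZMod.intCast_zmod_eq_zero_iff_dvd a p).mp h)
  have hbF : (b : ZMod p) ^ 2 - 4 * a * c ≠ 0 := by
    intro h
    apply hb
    rw [← ZMod.intCast_zmod_eq_zero_iff_dvd]
    push_cast
    linear_combination -h
  have hΔF : 8 * (a : ZMod p) * c * f + 2*b*d*e - 2*a*e^2 - 2*c*d^2 - 2*f*b^2 ≠ 0 := by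
    intro h
    apply hΔ
    rw [← ZMod.intCast_zmod_eq_zero_iff_dvd]
    push_cast
    linear_combination h
  have h8 : (-8 : ZMod p) ≠ 0 := by
    rw [show (-8 : ZMod p) = -(2^3) by norm_num]
    exact neg_ne_zero.mpr (pow_ne_zero 3 h2)
  set χ : MulChar (ZMod p) ℤ := quadraticChar (ZMod p) with hχ
  -- the inner-most count over x, for fixed y, z with z ≠ 0
  have hxcount : ∀ y z : ZMod p,
      ((univ.filter fun x : ZMod p =>
        (a : ZMod p)*x^2 + b*x*y + c*y^2 + d*x*z + e*y*z + f*z^2 = 0).card : ℤ)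
      = χ ((b*y + d*z)^2 - 4*(a : ZMod p)*(c*y^2 + e*y*z + f*z^2)) + 1 := by
    intro y z
    rw [Finset.filter_congr (q := fun x : ZMod p =>
        (a : ZMod p) * x ^ 2 + (b*y + d*z) * x + (c*y^2 + e*y*z + f*z^2) = 0)
      (fun x _ => by constructor <;> intro h <;> linear_combination h)]
    exact aux_card_quadratic hF _ _ haF
  -- sum of the character over y, for fixed z ≠ 0
  have hysum : ∀ z : ZMod p, z ≠ 0 →
      ∑ y : ZMod p, χ ((b*y + d*z)^2 - 4*(a : ZMod p)*(c*y^2 + e*y*z + f*z^2))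
        = -χ ((b : ZMod p)^2 - 4*a*c) := by
    intro z hz
    have hrw : ∀ y : ZMod p, (b*y + d*z)^2 - 4*(a : ZMod p)*(c*y^2 + e*y*z + f*z^2)
        = ((b : ZMod p)^2 - 4*a*c) * y^2 + ((2*b*d - 4*(a : ZMod p)*e)*z) * y
          + ((d^2 - 4*(a : ZMod p)*f)*z^2) := fun y => by ring
    simp only [hrw]
    apply aux_sum_quadratic hF _ _ hbF
    rw [show ((2*b*d - 4*(a : ZMod p)*e)*z)^2
        - 4 * ((b : ZMod p)^2 - 4*a*c) * ((d^2 - 4*(a : ZMod p)*f)*z^2)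
        = (-8 : ZMod p) * a
          * (8 * (a : ZMod p) * c * f + 2*b*d*e - 2*a*e^2 - 2*c*d^2 - 2*f*b^2) * z^2
      by ring]
    exact mul_ne_zero (mul_ne_zero (mul_ne_zero h8 haF) hΔF) (pow_ne_zero 2 hz)
  -- the main count
  have hcard : (Nat.card {v : ZMod p × ZMod p × ZMod p //
        (a : ZMod p)*v.1^2 + b*v.1*v.2.1 + c*v.2.1^2
          + d*v.1*v.2.2 + e*v.2.1*v.2.2 + f*v.2.2^2 = 0 ∧ v.2.2 ≠ 0} : ℤ)
      = ((p : ℤ) - 1) * ((p : ℤ) - χ ((b : ZMod p)^2 - 4*a*c)) := by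
    rw [Nat.card_eq_fintype_card, Fintype.card_subtype, Finset.card_filter]
    push_cast
    rw [Fintype.sum_prod_type, Finset.sum_comm]
    have hxsum : ∀ w : ZMod p × ZMod p,
        (∑ x : ZMod p, if ((a : ZMod p)*x^2 + b*x*w.1 + c*w.1^2
            + d*x*w.2 + e*w.1*w.2 + f*w.2^2 = 0 ∧ w.2 ≠ 0) then (1 : ℤ) else 0)
        = if w.2 = 0 then 0
          else χ ((b*w.1 + d*w.2)^2 - 4*(a : ZMod p)*(c*w.1^2 + e*w.1*w.2 + f*w.2^2)) + 1 := by
      intro w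
      by_cases hz : w.2 = 0
      · simp [hz]
      · simp only [hz, if_false, ne_eq, not_false_eq_true, and_true]
        rw [Finset.sum_boole]
        exact hxcount w.1 w.2
    refine Eq.trans (Finset.sum_congr rfl fun w _ => hxsum w) ?_
    rw [Fintype.sum_prod_type, Finset.sum_comm]
    have hyz : ∀ z : ZMod p,
        (∑ y : ZMod p, if z = 0 then (0 : ℤ)
          else χ ((b*y + d*z)^2 - 4*(a : ZMod p)*(c*y^2 + e*y*z + f*z^2)) + 1)
        = if z = 0 then 0 else ((p : ℤ) - χ ((b : ZMod p)^2 - 4*a*c)) := by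
      intro z
      by_cases h0 : z = 0
      · simp [h0]
      · simp only [h0, if_false]
        rw [Finset.sum_add_distrib, hysum z h0, Finset.sum_const, Finset.card_univ,
          ZMod.card, nsmul_eq_mul, mul_one]
        ring
    refine Eq.trans (Finset.sum_congr rfl fun z _ => hyz z) ?_
    have herase : ∑ z ∈ univ.erase (0 : ZMod p),
          (if z = 0 then (0 : ℤ) else ((p : ℤ) - χ ((b : ZMod p)^2 - 4*a*c)))
        = ∑ _z ∈ univ.erase (0 : ZMod p), ((p : ℤ) - χ ((b : ZMod p)^2 - 4*a*c)) :=
      Finset.sum_congr rfl fun z hzz => by rw [if_neg (Finset.ne_of_mem_erase hzz)]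
    rw [← Finset.add_sum_erase univ _ (Finset.mem_univ (0 : ZMod p)), if_pos rfl, zero_add,
      herase, Finset.sum_const, Finset.card_erase_of_mem (Finset.mem_univ _),
      Finset.card_univ, ZMod.card, nsmul_eq_mul]
    have hp1 : ((p - 1 : ℕ) : ℤ) = (p : ℤ) - 1 := by
      have := hp.two_le; omega
    rw [hp1]
  have hleg : (legendreSym p (b ^ 2 - 4 * a * c) : ℤ)
      = χ ((b : ZMod p) ^ 2 - 4 * a * c) := by
    rw [hχ, legendreSym]
    congr 1
    push_cast
    ring
  constructor
  · rw [hleg]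
    exact hcard
  · have hb0 : ((b ^ 2 - 4 * a * c : ℤ) : ZMod p) ≠ 0 := by
      intro h
      apply hbF
      push_cast at h
      linear_combination h
    have hl := legendreSym.eq_one_or_neg_one p hb0
    have hp3 : 3 ≤ p := by have := hp.two_le; omega
    have hpos : (0 : ℤ) < ((p : ℤ) - 1) * ((p : ℤ) - χ ((b : ZMod p)^2 - 4*a*c)) := by
      have hp3' : (3 : ℤ) ≤ (p : ℤ) := by exact_mod_cast hp3
      rw [← hleg]
      rcases hl with h | h <;> rw [h] <;> nlinarith
    rw [← hcard] at hpos
    have hne : Nonempty {v : ZMod p × ZMod p × ZMod p //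
        (a : ZMod p)*v.1^2 + b*v.1*v.2.1 + c*v.2.1^2
          + d*v.1*v.2.2 + e*v.2.1*v.2.2 + f*v.2.2^2 = 0 ∧ v.2.2 ≠ 0} := by
      have := Int.natCast_pos.mp hpos
      exact (Nat.card_pos_iff.mp this).1
    obtain ⟨⟨⟨x, y, z⟩, hQ, hz⟩⟩ := hne
    exact ⟨x, y, z, hQ, hz⟩
end

section
/- Let p be an odd prime, let a,b,c,l₁,l₂,A,B ∈ ℤ with p ∤ a and p ∤ (aB² − bAB + cA²) (equivalently p ∤ 4Δ). Set D = (al₂² − bl₁l₂ + cl₁²)(aB² − bAB + cA²). If D ≡ 0 (mod p), (aB−bA)l₁ + aAl₂ ≢ 0 (mod p), and α is the (double) root mod p of ((aB−bA)l₁ + aAl₂)t² + 2(aBl₂ − cAl₁)t + ((bB−cA)l₂ − cBl₁) ≡ 0 (mod p), then aα² + bα + c ≡ 0 (mod p). -/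
/-- If `D ≡ 0 (mod p)` and `α` is the double root mod `p` of
`((aB−bA)l₁ + aAl₂)t² + 2(aBl₂ − cAl₁)t + ((bB−cA)l₂ − cBl₁) ≡ 0 (mod p)`,
then `aα² + bα + c ≡ 0 (mod p)`. -/
theorem double_root_kills_denominator
    (p : ℕ) [Fact p.Prime] (hodd : Odd p)
    (a b c l₁ l₂ A B α : ℤ)
    (ha : ¬ (p : ℤ) ∣ a)
    (hAB : ¬ (p : ℤ) ∣ (a*B^2 - b*A*B + c*A^2))
    (hD : (p : ℤ) ∣ ((a*l₂^2 - b*l₁*l₂ + c*l₁^2)*(a*B^2 - b*A*B + c*A^2)))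
    (hden : ¬ (p : ℤ) ∣ ((a*B - b*A)*l₁ + a*A*l₂))
    (hroot : (p : ℤ) ∣ (((a*B - b*A)*l₁ + a*A*l₂)*α^2
        + 2*(a*B*l₂ - c*A*l₁)*α + ((b*B - c*A)*l₂ - c*B*l₁))) :
    (p : ℤ) ∣ (a*α^2 + b*α + c) := by
  have hp : Prime (p : ℤ) := Nat.prime_iff_prime_int.mp Fact.out
  have hL : (p : ℤ) ∣ (a*l₂^2 - b*l₁*l₂ + c*l₁^2) :=
    (hp.dvd_mul.mp hD).resolve_right hAB
  -- move to ZMod p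
  rw [← ZMod.intCast_zmod_eq_zero_iff_dvd] at hL hroot hden ⊢
  push_cast at hL hroot hden ⊢
  set F := ZMod p
  set a' : F := (a : F)
  set b' : F := (b : F)
  set c' : F := (c : F)
  set l₁' : F := (l₁ : F)
  set l₂' : F := (l₂ : F)
  set A' : F := (A : F)
  set B' : F := (B : F)
  set α' : F := (α : F)
  set d : F := (a'*B' - b'*A')*l₁' + a'*A'*l₂' with hd
  set m : F := a'*B'*l₂' - c'*A'*l₁' with hm
  have hsq : (d*α' + m)^2 = 0 := by
    have : (d*α' + m)^2 =
        d*((a'*B' - b'*A')*l₁' + a'*A'*l₂')*α'^2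
          + d*(2*(a'*B'*l₂' - c'*A'*l₁'))*α'
          + d*((b'*B' - c'*A')*l₂' - c'*B'*l₁')
          + (a'*l₂'^2 - b'*l₁'*l₂' + c'*l₁'^2)*(a'*B'^2 - b'*A'*B' + c'*A'^2) := by
      rw [hd, hm]; ring
    rw [this, hL]
    calc d*((a'*B' - b'*A')*l₁' + a'*A'*l₂')*α'^2
          + d*(2*(a'*B'*l₂' - c'*A'*l₁'))*α'
          + d*((b'*B' - c'*A')*l₂' - c'*B'*l₁')
          + 0*(a'*B'^2 - b'*A'*B' + c'*A'^2)
        = d*(((a'*B' - b'*A')*l₁' + a'*A'*l₂')*α'^2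
            + 2*(a'*B'*l₂' - c'*A'*l₁')*α' + ((b'*B' - c'*A')*l₂' - c'*B'*l₁')) := by ring
      _ = 0 := by rw [hroot]; ring
  have hdm : d*α' + m = 0 := by
    have := pow_eq_zero_iff (n := 2) (by norm_num) |>.mp hsq
    exact this
  have hda : d*α' = -m := by linear_combination hdm
  have hkey : d^2 * (a'*α'^2 + b'*α' + c') = 0 := by
    have : d^2 * (a'*α'^2 + b'*α' + c')
        = a'*(d*α')^2 + b'*(d*α')*d + c'*d^2 := by ring
    rw [this, hda]
    have : a'*(-m)^2 + b'*(-m)*d + c'*d^2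
        = a'*((a'*l₂'^2 - b'*l₁'*l₂' + c'*l₁'^2)*(a'*B'^2 - b'*A'*B' + c'*A'^2)) := by
      rw [hd, hm]; ring
    rw [this, hL]; ring
  have hd2 : d^2 ≠ 0 := pow_ne_zero _ hden
  exact (mul_eq_zero.mp hkey).resolve_left hd2
end
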